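/- arXiv:2207.02058 — 16 statements merged into one kernel-verified Lean document; each statement's English description precedes it below -/
import Mathlib

section
/- For all real parameters λ₀, λ₁, λ₂ > 0 and every τ ∈ ℝ, the infimum over u ∈ ℝ of the function h(u) = τ·u + λ₀·𝟙{u ≠ 0} + λ₁·|u| + λ₂·u² equals Φ(τ); that is, inf_{u ∈ ℝ} ( τu + λ₀·𝟙{u≠0} + λ₁|u| + λ₂u² ) = λ₀ − (|τ| − λ₁)²/(4λ₂) if |τ| > 2√(λ₀λ₂) + λ₁, and equals 0 if |τ| ≤ 2√(λ₀λ₂) + λ₁. -/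
open scoped Classical

/-- For λ₀, λ₁, λ₂ > 0 and τ ∈ ℝ, the infimum over u ∈ ℝ of
h(u) = τ·u + λ₀·𝟙{u ≠ 0} + λ₁·|u| + λ₂·u² equals
λ₀ − (|τ| − λ₁)²/(4λ₂) if |τ| > 2√(λ₀λ₂) + λ₁, and 0 otherwise. -/
theorem statement_0 (l0 l1 l2 : ℝ) (hl0 : 0 < l0) (hl1 : 0 < l1) (hl2 : 0 < l2)
    (τ : ℝ) :
    IsGLB
      (Set.range fun u : ℝ =>
        τ * u + l0 * (if u ≠ 0 then (1 : ℝ) else 0) + l1 * |u| + l2 * u ^ 2)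
      (if 2 * Real.sqrt (l0 * l2) + l1 < |τ| then l0 - (|τ| - l1) ^ 2 / (4 * l2)
       else 0) := by
  have hs0 : 0 ≤ |τ| := abs_nonneg τ
  have hr : Real.sqrt (l0 * l2) ^ 2 = l0 * l2 := Real.sq_sqrt (by positivity)
  have hrpos : 0 < Real.sqrt (l0 * l2) := Real.sqrt_pos.mpr (by positivity)
  apply IsLeast.isGLB
  constructor
  · -- membership
    by_cases hc : 2 * Real.sqrt (l0 * l2) + l1 < |τ|
    · rw [if_pos hc]
      have hspos : 0 < |τ| := lt_trans (by positivity) hc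
      have hτ : τ ≠ 0 := fun h => by simp [h] at hspos
      have htpos : 0 < (|τ| - l1) / (2 * l2) := by
        apply div_pos _ (by positivity)
        nlinarith
      set t : ℝ := (|τ| - l1) / (2 * l2) with ht
      refine ⟨-τ * t / |τ|, ?_⟩
      have habs : |τ| ^ 2 = τ ^ 2 := sq_abs τ
      have h1 : τ * (-τ * t / |τ|) = -(|τ| * t) := by
        field_simp
        linear_combination habs
      have h2 : |(-τ * t / |τ|)| = t := by
        rw [abs_div, abs_mul, abs_neg, abs_abs, abs_of_pos htpos]
        field_simp
      have h3 : (-τ * t / |τ|) ≠ 0 := by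
        apply div_ne_zero _ (ne_of_gt hspos)
        exact mul_ne_zero (neg_ne_zero.mpr hτ) (ne_of_gt htpos)
      simp only [h3, if_pos, ne_eq, not_false_eq_true, h1, h2, mul_one]
      have h4 : (-τ * t / |τ|) ^ 2 = t ^ 2 := by
        rw [← sq_abs, h2]
      rw [h4, ht]
      field_simp
      ring
    · rw [if_neg hc]
      exact ⟨0, by norm_num⟩
  · rintro x ⟨u, rfl⟩
    simp only
    by_cases hu : u = 0
    · subst hu
      norm_num
      split_ifs with hc
      · have hA : 4 * l2 * ((|τ| - l1) ^ 2 / (4 * l2)) = (|τ| - l1) ^ 2 := by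
          field_simp
        nlinarith [sq_nonneg (|τ| - l1 - 2 * Real.sqrt (l0 * l2)), hA]
      · norm_num
    · have htu : -( |τ| * |u|) ≤ τ * u := by
        have := neg_abs_le (τ * u)
        rwa [abs_mul] at this
      have hu0 : 0 < |u| := abs_pos.mpr hu
      have hu2 : u ^ 2 = |u| ^ 2 := (sq_abs u).symm
      simp only [hu, if_pos, ne_eq, not_false_eq_true, mul_one, hu2]
      split_ifs with hc
      · have hA : 4 * l2 * ((|τ| - l1) ^ 2 / (4 * l2)) = (|τ| - l1) ^ 2 := by
          field_simp
        nlinarith [sq_nonneg (2 * l2 * |u| - (|τ| - l1)), hA]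
      · push_neg at hc
        nlinarith [sq_nonneg (l2 * |u| - Real.sqrt (l0 * l2)), mul_pos hl2 hu0]
end

section
/- For all real parameters λ₀, λ₁, λ₂ > 0 and every τ ∈ ℝ, the set of minimizers over u ∈ ℝ of h(u) = τ·u + λ₀·𝟙{u ≠ 0} + λ₁·|u| + λ₂·u² is: the singleton {û} with û = −sign(τ)·(|τ| − λ₁)/(2λ₂) if |τ| > 2√(λ₀λ₂) + λ₁; the singleton {0} if |τ| < 2√(λ₀λ₂) + λ₁; and the two-point set {0, û} if |τ| = 2√(λ₀λ₂) + λ₁. -/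
open scoped Classical

/-- For λ₀, λ₁, λ₂ > 0 and τ ∈ ℝ, the set of minimizers over u ∈ ℝ of
h(u) = τ·u + λ₀·𝟙{u ≠ 0} + λ₁·|u| + λ₂·u² is {û} with û = −sign(τ)·(|τ| − λ₁)/(2λ₂)
if |τ| > 2√(λ₀λ₂) + λ₁; {0} if |τ| < 2√(λ₀λ₂) + λ₁; and {0, û} if equality holds. -/
theorem statement_1 (l0 l1 l2 : ℝ) (hl0 : 0 < l0) (hl1 : 0 < l1) (hl2 : 0 < l2)
    (τ : ℝ) :
    {u : ℝ | ∀ v : ℝ,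
        τ * u + l0 * (if u ≠ 0 then (1 : ℝ) else 0) + l1 * |u| + l2 * u ^ 2 ≤
        τ * v + l0 * (if v ≠ 0 then (1 : ℝ) else 0) + l1 * |v| + l2 * v ^ 2} =
      (if 2 * Real.sqrt (l0 * l2) + l1 < |τ| then
        {-(Real.sign τ) * (|τ| - l1) / (2 * l2)}
      else if |τ| < 2 * Real.sqrt (l0 * l2) + l1 then
        ({0} : Set ℝ)
      else
        ({0, -(Real.sign τ) * (|τ| - l1) / (2 * l2)} : Set ℝ)) := by
  have h2l2 : (0:ℝ) < 2 * l2 := by positivity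
  set s := Real.sqrt (l0 * l2) with hsdef
  have hspos : 0 < s := Real.sqrt_pos.2 (by positivity)
  have hs2 : s * s = l0 * l2 := Real.mul_self_sqrt (by positivity)
  set A := |τ| - l1 with hAdef
  set m := l0 - A ^ 2 / (4 * l2) with hmdef
  set uh := -Real.sign τ * A / (2 * l2) with huhdef
  -- algebraic expansion
  have expand : ∀ v : ℝ, τ * v + l0 + l1 * |v| + l2 * v ^ 2
      = m + (τ * v + |τ| * |v|) + l2 * (|v| - A / (2 * l2)) ^ 2 := by
    intro v
    have h3 : l2 * (|v| - A / (2 * l2)) ^ 2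
        = l2 * v ^ 2 - A * |v| + A ^ 2 / (4 * l2) := by
      have e : (|v| - A / (2 * l2)) ^ 2
          = |v| ^ 2 - 2 * (A / (2 * l2)) * |v| + (A / (2 * l2)) ^ 2 := by ring
      rw [e, sq_abs]
      field_simp
      ring
    rw [h3, hmdef, hAdef]; ring
  have term1 : ∀ v : ℝ, 0 ≤ τ * v + |τ| * |v| := by
    intro v
    have h := neg_abs_le (τ * v)
    rw [abs_mul] at h
    linarith
  have hzero : τ * (0:ℝ) + l0 * (if (0:ℝ) ≠ 0 then (1:ℝ) else 0) + l1 * |(0:ℝ)|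
      + l2 * (0:ℝ) ^ 2 = 0 := by simp
  have hlow : ∀ v : ℝ, v ≠ 0 →
      m ≤ τ * v + l0 * (if v ≠ 0 then (1:ℝ) else 0) + l1 * |v| + l2 * v ^ 2 := by
    intro v hv
    rw [if_pos hv, mul_one, expand v]
    have h1 := term1 v
    nlinarith [sq_nonneg (|v| - A / (2 * l2))]
  -- strict positivity off zero when A < 2s
  have hposcase : A < 2 * s → ∀ v : ℝ, v ≠ 0 →
      0 < τ * v + l0 * (if v ≠ 0 then (1:ℝ) else 0) + l1 * |v| + l2 * v ^ 2 := by
    intro hAlt v hv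
    rw [if_pos hv, mul_one]
    have h1 := term1 v
    have h2 : 0 < |v| := abs_pos.2 hv
    set a := Real.sqrt l0 with hadef
    have ha : a * a = l0 := Real.mul_self_sqrt hl0.le
    set b := Real.sqrt l2 with hbdef
    have hb : b * b = l2 := Real.mul_self_sqrt hl2.le
    have hab : a * b = s := by rw [hadef, hbdef, hsdef, ← Real.sqrt_mul hl0.le]
    have key : 0 ≤ l0 - 2 * s * |v| + l2 * (v * v) := by
      have h := sq_nonneg (a - b * |v|)
      have e : (a - b * |v|) ^ 2
          = a * a - 2 * (a * b) * |v| + (b * b) * (|v| * |v|) := by ring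
      rw [e, ha, hb, hab, abs_mul_abs_self] at h
      linarith
    have hprod : 0 < (2 * s + l1 - |τ|) * |v| :=
      mul_pos (by linarith [hAdef.le, hAdef.ge]) h2
    nlinarith [h1, key, hprod]
  -- uniqueness of the nonzero minimizer
  have huniq : ∀ u : ℝ, u ≠ 0 → τ ≠ 0 →
      τ * u + l0 * (if u ≠ 0 then (1:ℝ) else 0) + l1 * |u| + l2 * u ^ 2 ≤ m →
      u = uh := by
    intro u hu hτ hle
    rw [if_pos hu, mul_one, expand u] at hle
    have h1 := term1 u
    have hq : 0 ≤ l2 * (|u| - A / (2 * l2)) ^ 2 := by positivity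
    have e1 : τ * u + |τ| * |u| = 0 := by linarith
    have e2 : l2 * (|u| - A / (2 * l2)) ^ 2 = 0 := by linarith
    have e3 : |u| = A / (2 * l2) := by
      rcases mul_eq_zero.1 e2 with h | h
      · exact absurd h (ne_of_gt hl2)
      · have := pow_eq_zero_iff (n := 2) (by norm_num) |>.1 h
        linarith
    rcases hτ.lt_or_gt with hneg | hpos
    · have hsgn : Real.sign τ = -1 := Real.sign_of_neg hneg
      have habs : |τ| = -τ := abs_of_neg hneg
      have e4 : τ * (u - |u|) = 0 := by rw [habs] at e1; linear_combination e1
      rcases mul_eq_zero.1 e4 with h | h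
      · exact absurd h hτ
      · have huu : u = |u| := by linarith
        have : uh = A / (2 * l2) := by rw [huhdef, hsgn]; ring
        rw [this, huu, e3]
    · have hsgn : Real.sign τ = 1 := Real.sign_of_pos hpos
      have habs : |τ| = τ := abs_of_pos hpos
      have e4 : τ * (u + |u|) = 0 := by rw [habs] at e1; linear_combination e1
      rcases mul_eq_zero.1 e4 with h | h
      · exact absurd h hτ
      · have huu : u = -|u| := by linarith
        have : uh = -(A / (2 * l2)) := by rw [huhdef, hsgn]; ring
        rw [this, huu, e3]
  -- value at uh
  have hval : 0 < A →
      τ * uh + l0 * (if uh ≠ 0 then (1:ℝ) else 0) + l1 * |uh| + l2 * uh ^ 2 = m := by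
    intro hApos
    have hτ : τ ≠ 0 := by
      intro h0
      rw [hAdef, h0, abs_zero] at hApos
      linarith
    rcases hτ.lt_or_gt with hneg | hpos
    · have hsgn : Real.sign τ = -1 := Real.sign_of_neg hneg
      have habs : |τ| = -τ := abs_of_neg hneg
      have huhval : uh = A / (2 * l2) := by rw [huhdef, hsgn]; ring
      have huhpos : 0 < uh := by rw [huhval]; positivity
      rw [huhval, if_pos (by positivity : A / (2 * l2) ≠ 0),
        abs_of_pos (by positivity : (0:ℝ) < A / (2 * l2)), hmdef, hAdef, habs]
      field_simp
      ring
    · have hsgn : Real.sign τ = 1 := Real.sign_of_pos hpos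
      have habs : |τ| = τ := abs_of_pos hpos
      have huhval : uh = -(A / (2 * l2)) := by rw [huhdef, hsgn]; ring
      have hApd : (0:ℝ) < A / (2 * l2) := by positivity
      rw [huhval, if_pos (fun h => ne_of_gt hApd (neg_eq_zero.1 h)),
        abs_neg, abs_of_pos hApd, hmdef, hAdef, habs]
      field_simp
      ring
  rcases lt_trichotomy (2 * s + l1) |τ| with hc | hc | hc
  · -- supercritical: singleton uh
    rw [if_pos hc]
    have hA2s : 2 * s < A := by rw [hAdef]; linarith
    have hApos : 0 < A := by linarith
    have hτ : τ ≠ 0 := by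
      intro h0
      rw [h0, abs_zero] at hc
      linarith
    have hmneg : m < 0 := by
      rw [hmdef, sub_neg, lt_div_iff₀ (by positivity : (0:ℝ) < 4 * l2)]
      nlinarith [hs2]
    have hvm := hval hApos
    ext u
    simp only [Set.mem_setOf_eq, Set.mem_singleton_iff]
    constructor
    · intro hu
      have h1 := hu uh
      rw [hvm] at h1
      have hune : u ≠ 0 := by
        intro h0
        rw [h0, hzero] at h1
        linarith
      exact huniq u hune hτ h1
    · intro hu v
      rw [hu, hvm]
      by_cases hv : v = 0
      · rw [hv, hzero]; linarith
      · exact hlow v hv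
  · -- critical: {0, uh}
    have h1 : ¬ (2 * s + l1 < |τ|) := by rw [hc]; exact lt_irrefl _
    have h2 : ¬ (|τ| < 2 * s + l1) := by rw [hc]; exact lt_irrefl _
    rw [if_neg h1, if_neg h2]
    have hA2 : A = 2 * s := by rw [hAdef]; linarith
    have hApos : 0 < A := by rw [hA2]; linarith
    have hm0 : m = 0 := by
      rw [hmdef, hA2, sub_eq_zero, eq_div_iff (by positivity : (4:ℝ) * l2 ≠ 0)]
      linear_combination (-4) * hs2
    have hτ : τ ≠ 0 := by
      intro h0
      rw [h0, abs_zero] at hc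
      linarith
    have hvm := hval hApos
    ext u
    simp only [Set.mem_setOf_eq, Set.mem_insert_iff, Set.mem_singleton_iff]
    constructor
    · intro hu
      by_cases hu0 : u = 0
      · exact Or.inl hu0
      · refine Or.inr (huniq u hu0 hτ ?_)
        have h3 := hu 0
        rw [hzero] at h3
        linarith
    · intro hu v
      have hval0 : τ * u + l0 * (if u ≠ 0 then (1:ℝ) else 0) + l1 * |u| + l2 * u ^ 2
          = 0 := by
        rcases hu with h | h
        · rw [h, hzero]
        · rw [h, hvm, hm0]
      rw [hval0]
      by_cases hv : v = 0
      · rw [hv, hzero]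
      · have := hlow v hv
        linarith
  · -- subcritical: {0}
    have h1 : ¬ (2 * s + l1 < |τ|) := by linarith
    rw [if_neg h1, if_pos hc]
    have hAlt : A < 2 * s := by rw [hAdef]; linarith
    ext u
    simp only [Set.mem_setOf_eq, Set.mem_singleton_iff]
    constructor
    · intro hu
      by_contra hu0
      have h3 := hu 0
      rw [hzero] at h3
      have := hposcase hAlt u hu0
      linarith
    · intro hu v
      rw [hu, hzero]
      by_cases hv : v = 0
      · rw [hv, hzero]
      · exact (hposcase hAlt v hv).le
end

section
/- For all real parameters λ₀, λ₁, λ₂ > 0, every p ∈ ℕ and every τ ∈ ℝᵖ, the infimum over β ∈ ℝᵖ of ⟨τ, β⟩ + λ₀‖β‖₀ + λ₁‖β‖₁ + λ₂‖β‖² equals Σ_{j=1}^p Φ(τ_j), and this infimum is attained at the vector β* defined coordinatewise by β*_j = 𝔅(−τ_j/(2λ₂)). -/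
open scoped Classical

lemma key_le (l0 l1 l2 : ℝ) (hl0 : 0 < l0) (hl1 : 0 < l1) (hl2 : 0 < l2) (t b : ℝ) :
    (if 2 * Real.sqrt (l0 * l2) + l1 < |t| then l0 - (|t| - l1) ^ 2 / (4 * l2) else 0)
      ≤ t * b + l0 * (if b ≠ 0 then 1 else 0) + l1 * |b| + l2 * b ^ 2 := by
  set s := Real.sqrt (l0 * l2) with hs
  have hs2 : s ^ 2 = l0 * l2 := Real.sq_sqrt (by positivity)
  have hs0 : 0 ≤ s := Real.sqrt_nonneg _
  have h4 : (0:ℝ) < 4 * l2 := by linarith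
  have htb : -( |t| * |b| ) ≤ t * b := by
    have := neg_abs_le (t * b); rwa [abs_mul] at this
  have hb2 : b ^ 2 = |b| ^ 2 := (sq_abs b).symm
  have hbn : 0 ≤ |b| := abs_nonneg b
  by_cases hb : b = 0
  · simp only [hb, if_neg (by simp : ¬(0:ℝ) ≠ 0)]
    split_ifs with h
    · have : l0 - (|t| - l1) ^ 2 / (4 * l2) ≤ 0 := by
        rw [sub_nonpos, le_div_iff₀ h4]
        nlinarith [sq_nonneg (|t| - l1 - 2 * s)]
      simpa using this
    · simp
  · simp only [if_pos hb]
    rw [hb2]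
    split_ifs with h
    · rw [sub_le_iff_le_add, ← sub_le_iff_le_add', le_div_iff₀ h4]
      nlinarith [sq_nonneg (2 * l2 * |b| - (|t| - l1)),
        mul_le_mul_of_nonneg_left htb (le_of_lt h4)]
    · push_neg at h
      nlinarith [sq_nonneg (s - l2 * |b|),
        mul_le_mul_of_nonneg_left htb hl2.le,
        mul_le_mul_of_nonneg_right h (by positivity : (0:ℝ) ≤ l2 * |b|), hl2, hl0]

lemma key_eq (l0 l1 l2 : ℝ) (hl0 : 0 < l0) (hl1 : 0 < l1) (hl2 : 0 < l2) (t : ℝ)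
    (b : ℝ)
    (hb : b = if (2 * Real.sqrt (l0 * l2) + l1) / (2 * l2) < |-t / (2 * l2)| then
        Real.sign (-t / (2 * l2)) * (|-t / (2 * l2)| - l1 / (2 * l2)) else 0) :
    t * b + l0 * (if b ≠ 0 then 1 else 0) + l1 * |b| + l2 * b ^ 2
      = (if 2 * Real.sqrt (l0 * l2) + l1 < |t| then l0 - (|t| - l1) ^ 2 / (4 * l2) else 0) := by
  set s := Real.sqrt (l0 * l2) with hs
  have hs2 : s ^ 2 = l0 * l2 := Real.sq_sqrt (by positivity)
  have hs0 : 0 ≤ s := Real.sqrt_nonneg _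
  have h2l2 : (0:ℝ) < 2 * l2 := by linarith
  have habs : |-t / (2 * l2)| = |t| / (2 * l2) := by
    rw [abs_div, abs_neg, abs_of_pos h2l2]
  have hcond : ((2 * s + l1) / (2 * l2) < |-t / (2 * l2)|) ↔ (2 * s + l1 < |t|) := by
    rw [habs, div_lt_div_iff_of_pos_right h2l2]
  by_cases h : 2 * s + l1 < |t|
  · have ht0 : t ≠ 0 := by
      intro h0; rw [h0, abs_zero] at h; linarith
    have hsign : Real.sign (-t / (2 * l2)) = - Real.sign t := by
      rcases ht0.lt_or_gt with h' | h'
      · have h1 : 0 < -t / (2 * l2) := div_pos (by linarith) h2l2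
        rw [Real.sign_of_pos h1, Real.sign_of_neg h']; norm_num
      · have h1 : -t / (2 * l2) < 0 := div_neg_of_neg_of_pos (by linarith) h2l2
        rw [Real.sign_of_neg h1, Real.sign_of_pos h']
    set c := (|t| - l1) / (2 * l2) with hc
    have hbval : b = - Real.sign t * c := by
      rw [hb, if_pos (hcond.2 h), hsign, habs, hc]
      field_simp
    have hcpos : 0 < c := by
      apply div_pos _ h2l2; nlinarith
    have hsigt : Real.sign t * t = |t| := by
      rcases ht0.lt_or_gt with h' | h'
      · rw [Real.sign_of_neg h', abs_of_neg h']; ring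
      · rw [Real.sign_of_pos h', abs_of_pos h']; ring
    have hsabs : |Real.sign t| = 1 := by
      rcases ht0.lt_or_gt with h' | h'
      · rw [Real.sign_of_neg h']; simp
      · rw [Real.sign_of_pos h']; simp
    have habsb : |b| = c := by
      rw [hbval, abs_mul, abs_neg, hsabs, one_mul, abs_of_pos hcpos]
    have hbne : b ≠ 0 := by
      intro hz; rw [hz, abs_zero] at habsb; linarith
    have htb : t * b = -(|t| * c) := by
      rw [hbval, show t * (-Real.sign t * c) = -(Real.sign t * t * c) by ring, hsigt]
    have hb2 : b ^ 2 = c ^ 2 := by rw [← sq_abs, habsb]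
    rw [if_pos h, if_pos hbne, htb, habsb, hb2, hc]
    field_simp
    ring
  · rw [hb, if_neg (fun hh => h (hcond.1 hh)), if_neg h]
    simp

/-- For λ₀, λ₁, λ₂ > 0, p ∈ ℕ and τ ∈ ℝᵖ, the infimum over β ∈ ℝᵖ of
⟨τ,β⟩ + λ₀‖β‖₀ + λ₁‖β‖₁ + λ₂‖β‖² equals Σ_j Φ(τ_j), attained at β*_j = 𝔅(−τ_j/(2λ₂)). -/
theorem statement_2 (l0 l1 l2 : ℝ) (hl0 : 0 < l0) (hl1 : 0 < l1) (hl2 : 0 < l2)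
    (p : ℕ) (τ : Fin p → ℝ)
    (Φ : ℝ → ℝ)
    (hΦ : ∀ t : ℝ, Φ t =
      if 2 * Real.sqrt (l0 * l2) + l1 < |t| then l0 - (|t| - l1) ^ 2 / (4 * l2)
      else 0)
    (B : ℝ → ℝ)
    (hB : ∀ η : ℝ, B η =
      if (2 * Real.sqrt (l0 * l2) + l1) / (2 * l2) < |η| then
        Real.sign η * (|η| - l1 / (2 * l2))
      else 0)
    (F : (Fin p → ℝ) → ℝ)
    (hF : ∀ β : Fin p → ℝ, F β =
      (∑ j, τ j * β j)
        + l0 * ((Finset.univ.filter fun j => β j ≠ 0).card : ℝ)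
        + l1 * (∑ j, |β j|)
        + l2 * (∑ j, (β j) ^ 2))
    (βstar : Fin p → ℝ)
    (hβstar : ∀ j, βstar j = B (-(τ j) / (2 * l2))) :
    (∀ β : Fin p → ℝ, (∑ j, Φ (τ j)) ≤ F β) ∧ F βstar = ∑ j, Φ (τ j) := by
  have hFsum : ∀ β : Fin p → ℝ, F β =
      ∑ j, (τ j * β j + l0 * (if β j ≠ 0 then 1 else 0) + l1 * |β j| + l2 * (β j) ^ 2) := by
    intro β
    rw [hF β]
    have hcard : ((Finset.univ.filter fun j => β j ≠ 0).card : ℝ)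
        = ∑ j, (if β j ≠ 0 then (1:ℝ) else 0) := by
      rw [Finset.card_filter]
      push_cast
      simp [apply_ite (fun n : ℕ => (n : ℝ))]
    rw [hcard, Finset.mul_sum, Finset.mul_sum, Finset.mul_sum, ← Finset.sum_add_distrib,
      ← Finset.sum_add_distrib, ← Finset.sum_add_distrib]
  constructor
  · intro β
    rw [hFsum β]
    apply Finset.sum_le_sum
    intro j _
    rw [hΦ (τ j)]
    exact key_le l0 l1 l2 hl0 hl1 hl2 (τ j) (β j)
  · rw [hFsum βstar]
    apply Finset.sum_congr rfl
    intro j _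
    rw [hΦ (τ j)]
    apply key_eq l0 l1 l2 hl0 hl1 hl2 (τ j)
    rw [hβstar j, hB]
end

section
/- For all real parameters λ₀, λ₁, λ₂ > 0, the function Φ : ℝ → ℝ is concave on ℝ. -/
open scoped Classical

/-- For λ₀, λ₁, λ₂ > 0, the function Φ is concave on ℝ, where
Φ(τ) = λ₀ − (|τ| − λ₁)²/(4λ₂) if |τ| > 2√(λ₀λ₂) + λ₁ and Φ(τ) = 0 otherwise. -/
theorem statement_3 (l0 l1 l2 : ℝ) (hl0 : 0 < l0) (hl1 : 0 < l1) (hl2 : 0 < l2)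
    (Φ : ℝ → ℝ)
    (hΦ : ∀ t : ℝ, Φ t =
      if 2 * Real.sqrt (l0 * l2) + l1 < |t| then l0 - (|t| - l1) ^ 2 / (4 * l2)
      else 0) :
    ConcaveOn ℝ Set.univ Φ := by
  set q : ℝ → ℝ := fun t => max (|t| - l1) 0 with hq
  have hsq : Real.sqrt (l0 * l2) ^ 2 = l0 * l2 :=
    Real.sq_sqrt (le_of_lt (mul_pos hl0 hl2))
  -- Φ equals min 0 (l0 - q t ^ 2 / (4*l2))
  have hΦeq : Φ = fun t => min 0 (l0 - q t ^ 2 / (4 * l2)) := by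
    funext t
    rw [hΦ t]
    by_cases h : 2 * Real.sqrt (l0 * l2) + l1 < |t|
    · rw [if_pos h]
      have hl1t : l1 < |t| := by
        have : 0 < 2 * Real.sqrt (l0 * l2) :=
          mul_pos two_pos (Real.sqrt_pos.2 (mul_pos hl0 hl2))
        linarith
      have hqt : q t = |t| - l1 := max_eq_left (by linarith)
      have hbig : 4 * (l0 * l2) < (|t| - l1) ^ 2 := by
        have h1 : 2 * Real.sqrt (l0 * l2) < |t| - l1 := by linarith
        have h2 : (2 * Real.sqrt (l0 * l2)) ^ 2 < (|t| - l1) ^ 2 := by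
          apply pow_lt_pow_left₀ h1 (by positivity)
          norm_num
        calc 4 * (l0 * l2) = (2 * Real.sqrt (l0 * l2)) ^ 2 := by
              rw [mul_pow, hsq]; ring
          _ < (|t| - l1) ^ 2 := h2
      have hneg : l0 - (|t| - l1) ^ 2 / (4 * l2) < 0 := by
        rw [sub_neg]
        rw [lt_div_iff₀ (by positivity)]
        nlinarith
      rw [hqt, min_eq_right (le_of_lt hneg)]
    · rw [if_neg h]
      push_neg at h
      have hqle : q t ≤ 2 * Real.sqrt (l0 * l2) := by
        apply max_le (by linarith)
        positivity
      have hq0 : 0 ≤ q t := le_max_right _ _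
      have hqsq : q t ^ 2 ≤ 4 * (l0 * l2) := by
        have := pow_le_pow_left₀ hq0 hqle 2
        calc q t ^ 2 ≤ (2 * Real.sqrt (l0 * l2)) ^ 2 := this
          _ = 4 * (l0 * l2) := by rw [mul_pow, hsq]; ring
      have : 0 ≤ l0 - q t ^ 2 / (4 * l2) := by
        rw [sub_nonneg, div_le_iff₀ (by positivity)]
        nlinarith
      rw [min_eq_left this]
  rw [hΦeq]
  -- q is convex
  have hqconv : ConvexOn ℝ Set.univ q := by
    have habs : ConvexOn ℝ Set.univ (fun t : ℝ => |t|) := by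
      exact convexOn_univ_norm (E := ℝ)
    have h2 := (habs.add_const (-l1)).sup (convexOn_const 0 convex_univ)
    simpa [hq, sub_eq_add_neg, Pi.sup_def] using h2
  have hq2 : ConvexOn ℝ Set.univ (fun t => q t ^ 2) := by
    have := hqconv.pow (fun x _ => le_max_right _ _) (n := 2)
    simpa [Pi.pow_def] using this
  have hconc : ConcaveOn ℝ Set.univ (fun t => l0 - q t ^ 2 / (4 * l2)) := by
    have h1 : ConvexOn ℝ Set.univ (fun t => q t ^ 2 / (4 * l2)) := by
      have := hq2.smul (c := (4 * l2)⁻¹) (by positivity)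
      simpa [smul_eq_mul, div_eq_inv_mul] using this
    have := h1.neg.add_const l0
    simpa [sub_eq_neg_add, Pi.add_def, Pi.neg_def] using this
  exact (concaveOn_const 0 convex_univ).inf hconc
end

section
/- For the square-loss Lagrangian L, for every α ∈ ℝⁿ the infimum over β ∈ ℝᵖ of L(β, α) equals D(α); that is, inf_{β ∈ ℝᵖ} L(β, α) = −½‖α‖² − yᵀα + Σ_{j=1}^p Φ(x₍·j₎ᵀα). -/
open scoped Classical

private lemma aux_lb (l0 l1 l2 : ℝ) (hl0 : 0 < l0) (hl1 : 0 < l1) (hl2 : 0 < l2)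
    (t b : ℝ) :
    (if 2 * Real.sqrt (l0 * l2) + l1 < |t| then l0 - (|t| - l1) ^ 2 / (4 * l2) else 0)
      ≤ t * b + (if b ≠ 0 then l0 else 0) + l1 * |b| + l2 * b ^ 2 := by
  have hs0 : 0 ≤ Real.sqrt (l0 * l2) := Real.sqrt_nonneg _
  have hs : Real.sqrt (l0 * l2) ^ 2 = l0 * l2 := Real.sq_sqrt (by positivity)
  have htb : -(|t| * |b|) ≤ t * b := by rw [← abs_mul]; exact neg_abs_le _
  have hb2 : |b| ^ 2 = b ^ 2 := sq_abs b
  by_cases hb : b = 0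
  · subst hb
    simp only [ne_eq, not_true_eq_false, if_false, abs_zero, mul_zero, zero_pow,
      ne_eq, OfNat.ofNat_ne_zero, not_false_eq_true, add_zero, zero_add]
    split_ifs with h
    · have h4 : (0:ℝ) < 4 * l2 := by linarith
      rw [sub_nonpos, le_div_iff₀ h4]
      nlinarith [sq_nonneg (|t| - l1 - 2 * Real.sqrt (l0 * l2)),
        mul_nonneg hs0 (by linarith : (0:ℝ) ≤ |t| - l1 - 2 * Real.sqrt (l0 * l2))]
    · exact le_rfl
  · rw [if_pos hb]
    split_ifs with h
    · have h4 : (0:ℝ) < 4 * l2 := by linarith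
      have key : |b| * (|t| - l1) - l2 * b ^ 2 ≤ (|t| - l1) ^ 2 / (4 * l2) := by
        rw [le_div_iff₀ h4, ← hb2]
        nlinarith [sq_nonneg (2 * l2 * |b| - |t| + l1)]
      nlinarith [key, htb]
    · push_neg at h
      have k0 : 2 * Real.sqrt (l0 * l2) * |b| * l2 ≤ (l0 + l2 * b ^ 2) * l2 := by
        rw [← hb2]
        nlinarith [sq_nonneg (Real.sqrt (l0 * l2) - l2 * |b|), hs]
      have k1 : 2 * Real.sqrt (l0 * l2) * |b| ≤ l0 + l2 * b ^ 2 :=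
        le_of_mul_le_mul_right k0 hl2
      have k2 : |t| * |b| ≤ (2 * Real.sqrt (l0 * l2) + l1) * |b| :=
        mul_le_mul_of_nonneg_right h (abs_nonneg b)
      nlinarith [k1, k2, htb]

private lemma aux_att (l0 l1 l2 : ℝ) (hl0 : 0 < l0) (hl1 : 0 < l1) (hl2 : 0 < l2)
    (t : ℝ) :
    ∃ b : ℝ, t * b + (if b ≠ 0 then l0 else 0) + l1 * |b| + l2 * b ^ 2
      = (if 2 * Real.sqrt (l0 * l2) + l1 < |t| then l0 - (|t| - l1) ^ 2 / (4 * l2) else 0) := by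
  by_cases h : 2 * Real.sqrt (l0 * l2) + l1 < |t|
  · have hs0 : 0 ≤ Real.sqrt (l0 * l2) := Real.sqrt_nonneg _
    have hlt : l1 < |t| := by linarith
    have hl2' : (0:ℝ) < 2 * l2 := by linarith
    rcases abs_cases t with ⟨he, hsign⟩ | ⟨he, hsign⟩
    · rw [he] at hlt
      refine ⟨(l1 - t) / (2 * l2), ?_⟩
      have hbneg : (l1 - t) / (2 * l2) < 0 := div_neg_of_neg_of_pos (by linarith) hl2'
      rw [if_pos h, if_pos (ne_of_lt hbneg), abs_of_neg hbneg, he]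
      field_simp
      ring
    · rw [he] at hlt
      refine ⟨(-l1 - t) / (2 * l2), ?_⟩
      have hbpos : 0 < (-l1 - t) / (2 * l2) := div_pos (by linarith) hl2'
      rw [if_pos h, if_pos (ne_of_gt hbpos), abs_of_pos hbpos, he]
      field_simp
      ring
  · exact ⟨0, by simp [h]⟩

/-- For the square-loss Lagrangian L and every α ∈ ℝⁿ,
inf over β ∈ ℝᵖ of L(β, α) equals D(α) = −½‖α‖² − yᵀα + Σ_j Φ(x₍·j₎ᵀα). -/
theorem statement_4 (l0 l1 l2 : ℝ) (hl0 : 0 < l0) (hl1 : 0 < l1) (hl2 : 0 < l2)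
    (n p : ℕ) (X : Matrix (Fin n) (Fin p) ℝ) (y : Fin n → ℝ)
    (Φ : ℝ → ℝ)
    (hΦ : ∀ t : ℝ, Φ t =
      if 2 * Real.sqrt (l0 * l2) + l1 < |t| then l0 - (|t| - l1) ^ 2 / (4 * l2)
      else 0)
    (L : (Fin p → ℝ) → (Fin n → ℝ) → ℝ)
    (hL : ∀ (β : Fin p → ℝ) (α : Fin n → ℝ), L β α =
      (∑ i, α i * ∑ j, X i j * β j)
        - (1 / 2) * (∑ i, (α i) ^ 2) - (∑ i, y i * α i)
        + l0 * ((Finset.univ.filter fun j => β j ≠ 0).card : ℝ)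
        + l1 * (∑ j, |β j|)
        + l2 * (∑ j, (β j) ^ 2))
    (α : Fin n → ℝ) :
    IsGLB (Set.range fun β : Fin p → ℝ => L β α)
      (-(1 / 2) * (∑ i, (α i) ^ 2) - (∑ i, y i * α i)
        + ∑ j, Φ (∑ i, X i j * α i)) := by
  set t : Fin p → ℝ := fun j => ∑ i, X i j * α i with htdef
  have hLrw : ∀ β : Fin p → ℝ, L β α =
      (-(1 / 2) * (∑ i, (α i) ^ 2) - (∑ i, y i * α i))
      + ∑ j, (t j * β j + (if β j ≠ 0 then l0 else 0) + l1 * |β j| + l2 * (β j) ^ 2) := by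
    intro β
    rw [hL]
    have h1 : (∑ i, α i * ∑ j, X i j * β j) = ∑ j, t j * β j := by
      simp only [Finset.mul_sum]
      rw [Finset.sum_comm]
      refine Finset.sum_congr rfl fun j _ => ?_
      rw [htdef]
      rw [Finset.sum_mul]
      exact Finset.sum_congr rfl fun i _ => by ring
    have h2 : l0 * ((Finset.univ.filter fun j => β j ≠ 0).card : ℝ)
        = ∑ j, (if β j ≠ 0 then l0 else 0) := by
      rw [Finset.card_filter]
      push_cast
      rw [Finset.mul_sum]
      exact Finset.sum_congr rfl fun j _ => by split_ifs <;> simp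
    have h3 : l1 * (∑ j, |β j|) = ∑ j, l1 * |β j| := Finset.mul_sum _ _ _
    have h4 : l2 * (∑ j, (β j) ^ 2) = ∑ j, l2 * (β j) ^ 2 := Finset.mul_sum _ _ _
    rw [h1, h2, h3, h4]
    simp only [Finset.sum_add_distrib]
    ring
  have hPhi : ∀ j, Φ (t j) =
      if 2 * Real.sqrt (l0 * l2) + l1 < |t j| then l0 - (|t j| - l1) ^ 2 / (4 * l2) else 0 :=
    fun j => hΦ (t j)
  apply IsLeast.isGLB
  constructor
  · choose b hb using fun j => aux_att l0 l1 l2 hl0 hl1 hl2 (t j)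
    refine ⟨b, ?_⟩
    show L b α = _
    rw [hLrw b]
    have hsum : ∑ j, (t j * b j + (if b j ≠ 0 then l0 else 0) + l1 * |b j| + l2 * (b j) ^ 2)
        = ∑ j, Φ (t j) :=
      Finset.sum_congr rfl fun j _ => by rw [hb j, ← hPhi j]
    rw [hsum]
  · rintro z ⟨β, rfl⟩
    show _ ≤ L β α
    rw [hLrw β]
    have hsum : ∑ j, Φ (t j)
        ≤ ∑ j, (t j * β j + (if β j ≠ 0 then l0 else 0) + l1 * |β j| + l2 * (β j) ^ 2) :=
      Finset.sum_le_sum fun j _ => by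
        rw [hPhi j]; exact aux_lb l0 l1 l2 hl0 hl1 hl2 (t j) (β j)
    simp only [htdef] at hsum ⊢
    linarith
end

section
/- Let α ∈ ℝⁿ satisfy |η_j(α)| ≠ η₀ for every j ∈ {1,…,p}, and let β(α) ∈ ℝᵖ be defined by β(α)_j = 𝔅(η_j(α)). Then Σ_{j=1}^p Φ(x₍·j₎ᵀα) = λ₀‖β(α)‖₀ − λ₂‖β(α)‖². -/
open scoped Classical

/-- If |η_j(α)| ≠ η₀ for all j and β(α)_j = 𝔅(η_j(α)), then
Σ_j Φ(x₍·j₎ᵀα) = λ₀‖β(α)‖₀ − λ₂‖β(α)‖². -/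
theorem statement_6 (l0 l1 l2 : ℝ) (hl0 : 0 < l0) (hl1 : 0 < l1) (hl2 : 0 < l2)
    (n p : ℕ) (X : Matrix (Fin n) (Fin p) ℝ)
    (Φ : ℝ → ℝ)
    (hΦ : ∀ t : ℝ, Φ t =
      if 2 * Real.sqrt (l0 * l2) + l1 < |t| then l0 - (|t| - l1) ^ 2 / (4 * l2)
      else 0)
    (B : ℝ → ℝ)
    (hB : ∀ η : ℝ, B η =
      if (2 * Real.sqrt (l0 * l2) + l1) / (2 * l2) < |η| then
        Real.sign η * (|η| - l1 / (2 * l2))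
      else 0)
    (α : Fin n → ℝ)
    (η : Fin p → ℝ)
    (hη : ∀ j, η j = -(∑ i, X i j * α i) / (2 * l2))
    (hne : ∀ j, |η j| ≠ (2 * Real.sqrt (l0 * l2) + l1) / (2 * l2))
    (β : Fin p → ℝ)
    (hβ : ∀ j, β j = B (η j)) :
    (∑ j, Φ (∑ i, X i j * α i)) =
      l0 * ((Finset.univ.filter fun j => β j ≠ 0).card : ℝ)
        - l2 * (∑ j, (β j) ^ 2) := by
  have h2l2 : (0:ℝ) < 2 * l2 := by linarith
  have hsq : 0 < Real.sqrt (l0 * l2) := Real.sqrt_pos.mpr (by positivity)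
  have key : ∀ j, Φ (∑ i, X i j * α i) =
      (if β j ≠ 0 then l0 else 0) - l2 * (β j) ^ 2 := by
    intro j
    set τ := ∑ i, X i j * α i with hτdef
    have hτ : τ = -(2 * l2) * η j := by rw [hη j]; field_simp; exact hτdef
    have habs : |τ| = 2 * l2 * |η j| := by
      rw [hτ, abs_mul, abs_neg, abs_of_pos h2l2]
    rw [hΦ, hβ j, hB]
    by_cases hc : (2 * Real.sqrt (l0 * l2) + l1) / (2 * l2) < |η j|
    · have h1 : 2 * Real.sqrt (l0 * l2) + l1 < |τ| := by
        rw [habs]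
        rw [div_lt_iff₀ h2l2] at hc
        linarith
      rw [if_pos h1, if_pos hc]
      have hηne : η j ≠ 0 := by
        intro h0
        rw [h0, abs_zero] at hc
        have : 0 < (2 * Real.sqrt (l0 * l2) + l1) / (2 * l2) := by positivity
        linarith
      have hsgn : Real.sign (η j) = 1 ∨ Real.sign (η j) = -1 := by
        rcases lt_trichotomy (η j) 0 with h | h | h
        · right; exact Real.sign_of_neg h
        · exact absurd h hηne
        · left; exact Real.sign_of_pos h
      have hfac : l1 / (2 * l2) < |η j| := by
        refine lt_trans ?_ hc
        rw [div_lt_div_iff₀ h2l2 h2l2]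
        nlinarith
      have hfacpos : 0 < |η j| - l1 / (2 * l2) := by linarith
      have hne0 : Real.sign (η j) * (|η j| - l1 / (2 * l2)) ≠ 0 := by
        rcases hsgn with h | h <;> rw [h] <;> nlinarith
      rw [if_pos hne0]
      have hsq2 : (Real.sign (η j) * (|η j| - l1 / (2 * l2))) ^ 2
          = (|η j| - l1 / (2 * l2)) ^ 2 := by
        rcases hsgn with h | h <;> rw [h] <;> ring
      rw [hsq2, habs]
      field_simp
      ring
    · push_neg at hc
      have h1 : ¬ (2 * Real.sqrt (l0 * l2) + l1 < |τ|) := by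
        rw [habs]
        rw [le_div_iff₀ h2l2] at hc
        push_neg
        linarith
      rw [if_neg h1, if_neg (not_lt.mpr hc)]
      simp
  calc (∑ j, Φ (∑ i, X i j * α i))
      = ∑ j, ((if β j ≠ 0 then l0 else 0) - l2 * (β j) ^ 2) :=
        Finset.sum_congr rfl fun j _ => key j
    _ = (∑ j, (if β j ≠ 0 then l0 else 0)) - l2 * (∑ j, (β j) ^ 2) := by
        rw [Finset.sum_sub_distrib, Finset.mul_sum]
    _ = l0 * ((Finset.univ.filter fun j => β j ≠ 0).card : ℝ)
        - l2 * (∑ j, (β j) ^ 2) := by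
        congr 1
        rw [Finset.sum_ite, Finset.sum_const, Finset.sum_const]
        simp [mul_comm]
end

section
/- Let α ∈ ℝⁿ satisfy |η_j(α)| ≠ η₀ for every j ∈ {1,…,p}, and let β(α) ∈ ℝᵖ be defined by β(α)_j = 𝔅(η_j(α)). Then the duality gap satisfies the exact identity P(β(α)) − D(α) = ½‖X·β(α) − y − α‖². -/
open scoped Classical

lemma key_pt (l0 l1 l2 : ℝ) (hl0 : 0 < l0) (hl1 : 0 < l1) (hl2 : 0 < l2)
    (s e b : ℝ)
    (he : e = -s / (2 * l2))
    (hne : |e| ≠ (2 * Real.sqrt (l0 * l2) + l1) / (2 * l2))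
    (hb : b = if (2 * Real.sqrt (l0 * l2) + l1) / (2 * l2) < |e| then
        Real.sign e * (|e| - l1 / (2 * l2)) else 0) :
    l1 * |b| + l2 * b ^ 2 + (if b ≠ 0 then l0 else 0)
      - (if 2 * Real.sqrt (l0 * l2) + l1 < |s| then l0 - (|s| - l1) ^ 2 / (4 * l2) else 0)
      + b * s = 0 := by
  have h2 : (0:ℝ) < 2 * l2 := by linarith
  have hs' : s = -((2 * l2) * e) := by rw [he]; field_simp
  have habs : |s| = (2 * l2) * |e| := by rw [hs', abs_neg, abs_mul, abs_of_pos h2]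
  have hsq : 0 < Real.sqrt (l0 * l2) := Real.sqrt_pos.2 (by positivity)
  have hiff : (2 * Real.sqrt (l0 * l2) + l1) / (2 * l2) < |e| ↔
      2 * Real.sqrt (l0 * l2) + l1 < |s| := by
    rw [habs, div_lt_iff₀ h2, mul_comm (|e|) (2 * l2)]
  by_cases hc : (2 * Real.sqrt (l0 * l2) + l1) / (2 * l2) < |e|
  · have hcη : l1 / (2 * l2) < |e| := by
      have h1 : l1 / (2 * l2) < (2 * Real.sqrt (l0 * l2) + l1) / (2 * l2) := by
        gcongr
        linarith
      linarith
    have hene : e ≠ 0 := by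
      intro h
      rw [h, abs_zero] at hcη
      have : 0 < l1 / (2 * l2) := by positivity
      linarith
    rcases hene.lt_or_gt with hneg | hpos
    · have hbv : b = e + l1 / (2 * l2) := by
        rw [hb, if_pos hc, Real.sign_of_neg hneg, abs_of_neg hneg]; ring
      have hbneg : b < 0 := by
        rw [abs_of_neg hneg] at hcη
        rw [hbv]; linarith
      rw [hbv, abs_of_neg (by rw [← hbv]; exact hbneg), if_pos (by rw [← hbv]; exact hbneg.ne),
        if_pos (hiff.1 hc), habs, abs_of_neg hneg, hs']
      field_simp
      ring
    · have hbv : b = e - l1 / (2 * l2) := by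
        rw [hb, if_pos hc, Real.sign_of_pos hpos, abs_of_pos hpos, one_mul]
      have hbpos : 0 < b := by
        rw [abs_of_pos hpos] at hcη
        rw [hbv]; linarith
      rw [hbv, abs_of_pos (by rw [← hbv]; exact hbpos), if_pos (by rw [← hbv]; exact hbpos.ne'),
        if_pos (hiff.1 hc), habs, abs_of_pos hpos, hs']
      field_simp
      ring
  · have hb0 : b = 0 := by rw [hb, if_neg hc]
    have hΦ0 : ¬ (2 * Real.sqrt (l0 * l2) + l1 < |s|) := fun h => hc (hiff.2 h)
    rw [hb0, if_neg hΦ0]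
    simp

/-- If |η_j(α)| ≠ η₀ for all j and β(α)_j = 𝔅(η_j(α)), then the
duality gap satisfies P(β(α)) − D(α) = ½‖X·β(α) − y − α‖². -/
theorem statement_8 (l0 l1 l2 : ℝ) (hl0 : 0 < l0) (hl1 : 0 < l1) (hl2 : 0 < l2)
    (n p : ℕ) (X : Matrix (Fin n) (Fin p) ℝ) (y : Fin n → ℝ)
    (Φ : ℝ → ℝ)
    (hΦ : ∀ t : ℝ, Φ t =
      if 2 * Real.sqrt (l0 * l2) + l1 < |t| then l0 - (|t| - l1) ^ 2 / (4 * l2)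
      else 0)
    (B : ℝ → ℝ)
    (hB : ∀ η : ℝ, B η =
      if (2 * Real.sqrt (l0 * l2) + l1) / (2 * l2) < |η| then
        Real.sign η * (|η| - l1 / (2 * l2))
      else 0)
    (P : (Fin p → ℝ) → ℝ)
    (hP : ∀ β : Fin p → ℝ, P β =
      (1 / 2) * (∑ i, (y i - ∑ j, X i j * β j) ^ 2)
        + l1 * (∑ j, |β j|) + l2 * (∑ j, (β j) ^ 2)
        + l0 * ((Finset.univ.filter fun j => β j ≠ 0).card : ℝ))
    (D : (Fin n → ℝ) → ℝ)
    (hD : ∀ α : Fin n → ℝ, D α =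
      -(1 / 2) * (∑ i, (α i) ^ 2) - (∑ i, y i * α i)
        + ∑ j, Φ (∑ i, X i j * α i))
    (α : Fin n → ℝ)
    (η : Fin p → ℝ)
    (hη : ∀ j, η j = -(∑ i, X i j * α i) / (2 * l2))
    (hne : ∀ j, |η j| ≠ (2 * Real.sqrt (l0 * l2) + l1) / (2 * l2))
    (β : Fin p → ℝ)
    (hβ : ∀ j, β j = B (η j)) :
    P β - D α = (1 / 2) * ∑ i, ((∑ j, X i j * β j) - y i - α i) ^ 2 := by
  have hkey : ∀ j ∈ (Finset.univ : Finset (Fin p)),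
      (l1 * |β j| + l2 * (β j) ^ 2 + (if β j ≠ 0 then l0 else 0)
        - Φ (∑ i, X i j * α i) + β j * (∑ i, X i j * α i)) = 0 := by
    intro j _
    rw [hΦ]
    exact key_pt l0 l1 l2 hl0 hl1 hl2 (∑ i, X i j * α i) (η j) (β j) (hη j) (hne j)
      (by rw [hβ j, hB (η j)])
  have hsum0 := Finset.sum_eq_zero hkey
  simp only [Finset.sum_add_distrib, Finset.sum_sub_distrib, ← Finset.mul_sum] at hsum0
  have hcard : l0 * ((Finset.univ.filter fun j => β j ≠ 0).card : ℝ)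
      = ∑ j, (if β j ≠ 0 then l0 else 0) := by
    rw [← Finset.sum_boole, Finset.mul_sum]
    simp [mul_ite]
  have hexp : ∑ i, ((∑ j, X i j * β j) - y i - α i) ^ 2
      = ∑ i, (y i - ∑ j, X i j * β j) ^ 2 + ∑ i, (α i) ^ 2 + 2 * ∑ i, y i * α i
        - 2 * ∑ i, (∑ j, X i j * β j) * α i := by
    rw [Finset.mul_sum, Finset.mul_sum, ← Finset.sum_add_distrib, ← Finset.sum_add_distrib,
      ← Finset.sum_sub_distrib]
    exact Finset.sum_congr rfl fun i _ => by ring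
  have hswap : ∑ i, (∑ j, X i j * β j) * α i = ∑ j, β j * (∑ i, X i j * α i) := by
    simp_rw [Finset.sum_mul, Finset.mul_sum]
    rw [Finset.sum_comm]
    exact Finset.sum_congr rfl fun j _ => Finset.sum_congr rfl fun i _ => by ring
  rw [hP β, hD α, hcard, hexp]
  rw [hswap] 
  linarith [hsum0]
end

section
/- A pair (β̄, ᾱ) ∈ ℝᵖ × ℝⁿ is a saddle point of the square-loss Lagrangian L if and only if the following three conditions hold: (a) β̄ minimizes P over ℝᵖ, i.e. P(β̄) ≤ P(β) for all β ∈ ℝᵖ; (b) ᾱ = Xβ̄ − y; (c) the link condition holds: for every j ∈ {1,…,p}, either β̄_j = 0 and |η_j(ᾱ)| ≤ η₀, or β̄_j = sign(η_j(ᾱ))·(|η_j(ᾱ)| − λ₁/(2λ₂)) and |η_j(ᾱ)| ≥ η₀. -/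
open scoped Classical
set_option maxHeartbeats 1000000

noncomputable def Gf (l0 l1 l2 e t : ℝ) : ℝ :=
  l2*t^2 - 2*l2*e*t + l1*|t| + l0*(if t = 0 then 0 else 1)

lemma Gf_zero (l0 l1 l2 e : ℝ) : Gf l0 l1 l2 e 0 = 0 := by
  simp [Gf]

lemma Gf_ne (l0 l1 l2 e : ℝ) {t : ℝ} (ht : t ≠ 0) :
    Gf l0 l1 l2 e t = l2*t^2 - 2*l2*e*t + l1*|t| + l0 := by
  simp [Gf, ht]

lemma Gf_neg (l0 l1 l2 e t : ℝ) : Gf l0 l1 l2 (-e) (-t) = Gf l0 l1 l2 e t := by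
  simp only [Gf, abs_neg, neg_eq_zero]
  ring_nf

lemma scalar_nonneg (l0 l1 l2 : ℝ) (hl0 : 0 < l0) (hl1 : 0 < l1) (hl2 : 0 < l2)
    (e b : ℝ) (he : 0 ≤ e) :
    (∀ t, Gf l0 l1 l2 e b ≤ Gf l0 l1 l2 e t) ↔
      ((b = 0 ∧ |e| ≤ (2 * Real.sqrt (l0 * l2) + l1) / (2 * l2)) ∨
        (b = Real.sign e * (|e| - l1 / (2 * l2)) ∧
          (2 * Real.sqrt (l0 * l2) + l1) / (2 * l2) ≤ |e|)) := by
  obtain ⟨s, hs_def⟩ : ∃ s, s = Real.sqrt (l0 * l2) := ⟨_, rfl⟩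
  rw [← hs_def]
  have hs2 : s ^ 2 = l0 * l2 := by rw [hs_def]; exact Real.sq_sqrt (by positivity)
  have hspos : 0 < s := by rw [hs_def]; exact Real.sqrt_pos.mpr (by positivity)
  have habs : |e| = e := abs_of_nonneg he
  constructor
  · intro h
    by_cases hb : b = 0
    · left
      refine ⟨hb, ?_⟩
      rw [habs]
      by_contra hcon
      push_neg at hcon
      rw [div_lt_iff₀ (by positivity)] at hcon
      obtain ⟨t, ht_def⟩ : ∃ t, t = e - l1 / (2 * l2) := ⟨_, rfl⟩
      have h2t : 2 * l2 * t = 2 * l2 * e - l1 := by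
        rw [ht_def]; field_simp
      have htpos : 0 < t := by nlinarith
      have h1 := h t
      rw [hb, Gf_zero, Gf_ne _ _ _ _ (ne_of_gt htpos), abs_of_pos htpos] at h1
      -- 0 ≤ l0 - l2 t², but l2 t > s so l2² t² > s² = l0 l2
      have hts : s < l2 * t := by nlinarith
      nlinarith [mul_pos (sub_pos.mpr hts) (show (0:ℝ) < s + l2 * t by positivity)]
    · right
      have h0 := h 0
      rw [Gf_zero, Gf_ne _ _ _ _ hb] at h0
      have habsb : 0 < |b| := abs_pos.mpr hb
      have hebpos : 0 < e * b := by nlinarith [abs_nonneg b, le_abs_self b]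
      have hepos : 0 < e := by
        rcases lt_or_eq_of_le he with h' | h'
        · exact h'
        · exfalso; rw [← h'] at hebpos; simp at hebpos
      have hbpos : 0 < b := by
        by_contra hc
        push_neg at hc
        nlinarith [mul_nonpos_of_nonneg_of_nonpos hepos.le hc]
      rw [abs_of_pos hbpos] at h0
      obtain ⟨t, ht_def⟩ : ∃ t, t = e - l1 / (2 * l2) := ⟨_, rfl⟩
      have h2t : 2 * l2 * t = 2 * l2 * e - l1 := by
        rw [ht_def]; field_simp
      have htpos : 0 < t := by
        by_contra hc
        push_neg at hc
        have h3 : 2 * l2 * e ≤ l1 := by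
          nlinarith [mul_nonpos_of_nonneg_of_nonpos hl2.le hc]
        nlinarith [mul_nonpos_of_nonpos_of_nonneg
          (show 2 * l2 * e - l1 ≤ 0 by linarith) hbpos.le]
      have h1 := h t
      rw [Gf_ne _ _ _ _ hb, Gf_ne _ _ _ _ (ne_of_gt htpos), abs_of_pos htpos,
        abs_of_pos hbpos] at h1
      have hsq : (b - t) ^ 2 ≤ 0 := by nlinarith
      have hbt : b = t := by nlinarith [sq_nonneg (b - t)]
      rw [hbt] at h0
      have hx : (2 * l2 * e - l1) * t = 2 * l2 * t ^ 2 := by rw [← h2t]; ring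
      have hq : l0 ≤ l2 * t ^ 2 := by nlinarith [hx]
      have hst : s ≤ l2 * t := by
        by_contra hc
        push_neg at hc
        nlinarith [mul_pos (sub_pos.mpr hc) (show (0:ℝ) < s + l2 * t by positivity),
          mul_le_mul_of_nonneg_left hq hl2.le]
      constructor
      · rw [Real.sign_of_pos hepos, habs, one_mul, hbt, ht_def]
      · rw [habs, div_le_iff₀ (by positivity : (0:ℝ) < 2 * l2)]
        nlinarith
  · rintro (⟨hb0, hle⟩ | ⟨hbe, hge⟩)
    · intro t
      rw [hb0, Gf_zero]
      by_cases ht : t = 0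
      · rw [ht, Gf_zero]
      · rw [Gf_ne _ _ _ _ ht]
        rw [habs, le_div_iff₀ (by positivity : (0:ℝ) < 2 * l2)] at hle
        have het2 : 2 * l2 * (e * t) ≤ 2 * l2 * (e * |t|) :=
          mul_le_mul_of_nonneg_left
            (mul_le_mul_of_nonneg_left (le_abs_self t) he) (by positivity)
        have hmt : e * (2 * l2) * |t| ≤ (2 * s + l1) * |t| :=
          mul_le_mul_of_nonneg_right hle (abs_nonneg t)
        have key : 0 ≤ l2 * (l2 * |t| ^ 2 - 2 * s * |t| + l0) := by
          nlinarith [sq_nonneg (l2 * |t| - s)]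
        have hs' : 0 ≤ l2 * |t| ^ 2 - 2 * s * |t| + l0 :=
          nonneg_of_mul_nonneg_right key hl2
        nlinarith [sq_abs t]
    · have hn0pos : 0 < (2 * s + l1) / (2 * l2) := by positivity
      have hepos : 0 < e := by
        have := hge
        rw [habs] at this
        linarith [this, hn0pos]
      rw [Real.sign_of_pos hepos, habs, one_mul] at hbe
      rw [habs, div_le_iff₀ (by positivity : (0:ℝ) < 2 * l2)] at hge
      have h2t : 2 * l2 * b = 2 * l2 * e - l1 := by
        rw [hbe]; field_simp
      have hsb : s ≤ l2 * b := by linarith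
      have hbpos : 0 < b := by nlinarith [hspos]
      have hGb : Gf l0 l1 l2 e b = l0 - l2 * b ^ 2 := by
        rw [Gf_ne _ _ _ _ (ne_of_gt hbpos), abs_of_pos hbpos]
        linear_combination b * h2t
      intro t
      by_cases ht : t = 0
      · rw [ht, Gf_zero, hGb]
        have hq : l0 * l2 ≤ (l2 * b) * (l2 * b) := by
          nlinarith [mul_le_mul hsb hsb hspos.le (le_trans hspos.le hsb)]
        nlinarith [hq, hl2]
      · rw [hGb, Gf_ne _ _ _ _ ht]
        have het2 : 2 * l2 * (e * t) ≤ 2 * l2 * (e * |t|) :=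
          mul_le_mul_of_nonneg_left
            (mul_le_mul_of_nonneg_left (le_abs_self t) hepos.le) (by positivity)
        have hxx : 2 * l2 * e * |t| = 2 * l2 * b * |t| + l1 * |t| := by
          rw [show (2:ℝ) * l2 * e = 2 * l2 * b + l1 by linarith]; ring
        nlinarith [hxx, het2, mul_nonneg hl2.le (sq_nonneg (|t| - b)), sq_abs t]

lemma scalar_lemma (l0 l1 l2 : ℝ) (hl0 : 0 < l0) (hl1 : 0 < l1) (hl2 : 0 < l2)
    (e b : ℝ) :
    (∀ t, Gf l0 l1 l2 e b ≤ Gf l0 l1 l2 e t) ↔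
      ((b = 0 ∧ |e| ≤ (2 * Real.sqrt (l0 * l2) + l1) / (2 * l2)) ∨
        (b = Real.sign e * (|e| - l1 / (2 * l2)) ∧
          (2 * Real.sqrt (l0 * l2) + l1) / (2 * l2) ≤ |e|)) := by
  rcases le_or_gt 0 e with he | he
  · exact scalar_nonneg l0 l1 l2 hl0 hl1 hl2 e b he
  · have h := scalar_nonneg l0 l1 l2 hl0 hl1 hl2 (-e) (-b) (by linarith)
    have hflip : ∀ u, Gf l0 l1 l2 (-e) u = Gf l0 l1 l2 e (-u) := by
      intro u
      have := Gf_neg l0 l1 l2 e (-u)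
      rwa [neg_neg] at this
    have hflipb : Gf l0 l1 l2 (-e) (-b) = Gf l0 l1 l2 e b := Gf_neg l0 l1 l2 e b
    have hsgn : Real.sign (-e) * (|-e| - l1 / (2 * l2))
        = -(Real.sign e * (|e| - l1 / (2 * l2))) := by
      rw [abs_neg, Real.sign_of_pos (neg_pos.mpr he), Real.sign_of_neg he]; ring
    constructor
    · intro hG
      have h2 := h.mp (fun u => by rw [hflip u, hflipb]; exact hG (-u))
      rcases h2 with ⟨h1, h2⟩ | ⟨h1, h2⟩
      · exact Or.inl ⟨neg_eq_zero.mp h1, by rwa [abs_neg] at h2⟩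
      · refine Or.inr ⟨?_, by rwa [abs_neg] at h2⟩
        rw [hsgn] at h1
        linarith
    · intro hR t
      have hR' : (-b = 0 ∧ |-e| ≤ (2 * Real.sqrt (l0 * l2) + l1) / (2 * l2)) ∨
          (-b = Real.sign (-e) * (|-e| - l1 / (2 * l2)) ∧
            (2 * Real.sqrt (l0 * l2) + l1) / (2 * l2) ≤ |-e|) := by
        rcases hR with ⟨h1, h2⟩ | ⟨h1, h2⟩
        · exact Or.inl ⟨by rw [h1, neg_zero], by rwa [abs_neg]⟩
        · refine Or.inr ⟨?_, by rwa [abs_neg]⟩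
          rw [hsgn, h1]
      have := h.mpr hR' (-t)
      rw [hflipb, hflip (-t), neg_neg] at this
      exact this

/-- (β̄, ᾱ) is a saddle point of the square-loss Lagrangian L iff
(a) β̄ minimizes P; (b) ᾱ = Xβ̄ − y; (c) the link condition holds for every j. -/
theorem statement_9 (l0 l1 l2 : ℝ) (hl0 : 0 < l0) (hl1 : 0 < l1) (hl2 : 0 < l2)
    (n p : ℕ) (X : Matrix (Fin n) (Fin p) ℝ) (y : Fin n → ℝ)
    (P : (Fin p → ℝ) → ℝ)
    (hP : ∀ β : Fin p → ℝ, P β =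
      (1 / 2) * (∑ i, (y i - ∑ j, X i j * β j) ^ 2)
        + l1 * (∑ j, |β j|) + l2 * (∑ j, (β j) ^ 2)
        + l0 * ((Finset.univ.filter fun j => β j ≠ 0).card : ℝ))
    (L : (Fin p → ℝ) → (Fin n → ℝ) → ℝ)
    (hL : ∀ (β : Fin p → ℝ) (α : Fin n → ℝ), L β α =
      (∑ i, α i * ∑ j, X i j * β j)
        - (1 / 2) * (∑ i, (α i) ^ 2) - (∑ i, y i * α i)
        + l0 * ((Finset.univ.filter fun j => β j ≠ 0).card : ℝ)
        + l1 * (∑ j, |β j|)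
        + l2 * (∑ j, (β j) ^ 2))
    (η : (Fin n → ℝ) → Fin p → ℝ)
    (hη : ∀ (α : Fin n → ℝ) (j : Fin p), η α j = -(∑ i, X i j * α i) / (2 * l2))
    (βbar : Fin p → ℝ) (αbar : Fin n → ℝ) :
    ((∀ α : Fin n → ℝ, L βbar α ≤ L βbar αbar) ∧
     (∀ β : Fin p → ℝ, L βbar αbar ≤ L β αbar)) ↔
      ((∀ β : Fin p → ℝ, P βbar ≤ P β) ∧
       (∀ i, αbar i = (∑ j, X i j * βbar j) - y i) ∧
       (∀ j, (βbar j = 0 ∧ |η αbar j| ≤ (2 * Real.sqrt (l0 * l2) + l1) / (2 * l2)) ∨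
         (βbar j = Real.sign (η αbar j) * (|η αbar j| - l1 / (2 * l2)) ∧
           (2 * Real.sqrt (l0 * l2) + l1) / (2 * l2) ≤ |η αbar j|))) := by
  -- L β α = P β - (1/2) ‖α - (Xβ - y)‖²
  have hLP : ∀ (β : Fin p → ℝ) (α : Fin n → ℝ),
      L β α = P β - (1/2) * ∑ i, (α i - ((∑ j, X i j * β j) - y i))^2 := by
    intro β α
    rw [hL, hP]
    have hsum : (∑ i, α i * ∑ j, X i j * β j)
        - (1 / 2) * (∑ i, (α i) ^ 2) - (∑ i, y i * α i)
        = (1/2) * (∑ i, (y i - ∑ j, X i j * β j) ^ 2)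
          - (1/2) * ∑ i, (α i - ((∑ j, X i j * β j) - y i))^2 := by
      calc (∑ i, α i * ∑ j, X i j * β j)
          - (1 / 2) * (∑ i, (α i) ^ 2) - (∑ i, y i * α i)
          = ∑ i, (α i * (∑ j, X i j * β j) - 1/2 * (α i)^2 - y i * α i) := by
            rw [Finset.sum_sub_distrib, Finset.sum_sub_distrib, ← Finset.mul_sum]
        _ = ∑ i, (1/2 * (y i - ∑ j, X i j * β j)^2
              - 1/2 * (α i - ((∑ j, X i j * β j) - y i))^2) :=
            Finset.sum_congr rfl fun i _ => by ring
        _ = (1/2) * (∑ i, (y i - ∑ j, X i j * β j)^2)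
              - (1/2) * ∑ i, (α i - ((∑ j, X i j * β j) - y i))^2 := by
            rw [Finset.sum_sub_distrib, ← Finset.mul_sum, ← Finset.mul_sum]
    linarith [hsum]
  have hD : ∀ (β : Fin p → ℝ) (α : Fin n → ℝ),
      0 ≤ ∑ i, (α i - ((∑ j, X i j * β j) - y i))^2 :=
    fun β α => Finset.sum_nonneg fun i _ => sq_nonneg _
  -- the α-side equivalence
  have hαiff : (∀ α : Fin n → ℝ, L βbar α ≤ L βbar αbar) ↔
      (∀ i, αbar i = (∑ j, X i j * βbar j) - y i) := by
    constructor
    · intro h i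
      have h1 := h (fun i => (∑ j, X i j * βbar j) - y i)
      rw [hLP, hLP] at h1
      have hz : ∑ i, ((fun i' => (∑ j, X i' j * βbar j) - y i') i
          - ((∑ j, X i j * βbar j) - y i))^2 = 0 := by
        apply Finset.sum_eq_zero; intro i _; simp
      rw [hz] at h1
      have hD0 : ∑ i, (αbar i - ((∑ j, X i j * βbar j) - y i))^2 = 0 :=
        le_antisymm (by linarith) (hD βbar αbar)
      have h2 := (Finset.sum_eq_zero_iff_of_nonneg
        (fun i _ => sq_nonneg _)).mp hD0 i (Finset.mem_univ i)
      have h3 := (pow_eq_zero_iff two_ne_zero).mp h2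
      linarith [sub_eq_zero.mp h3]
    · intro hb α
      rw [hLP, hLP]
      have hz : ∑ i, (αbar i - ((∑ j, X i j * βbar j) - y i))^2 = 0 := by
        apply Finset.sum_eq_zero; intro i _; rw [hb i]; ring
      rw [hz]
      have := hD βbar α
      linarith
  -- separable form of L (·, αbar)
  have hLsep : ∀ β : Fin p → ℝ, L β αbar
      = (∑ j, Gf l0 l1 l2 (η αbar j) (β j))
        + (-(1/2) * ∑ i, (αbar i)^2 - ∑ i, y i * αbar i) := by
    intro β
    rw [hL]
    have hswap : ∑ i, αbar i * ∑ j, X i j * β j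
        = ∑ j, (∑ i, X i j * αbar i) * β j := by
      simp_rw [Finset.mul_sum]
      rw [Finset.sum_comm]
      exact Finset.sum_congr rfl fun j _ => by
        rw [Finset.sum_mul]; exact Finset.sum_congr rfl fun i _ => by ring
    have hcard : ((Finset.univ.filter fun j => β j ≠ 0).card : ℝ)
        = ∑ j, (if β j = 0 then (0:ℝ) else 1) := by
      rw [Finset.card_filter]
      push_cast
      exact Finset.sum_congr rfl fun j _ => by by_cases h : β j = 0 <;> simp [h]
    have hηe : ∀ j, (∑ i, X i j * αbar i) = -(2*l2) * η αbar j := by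
      intro j; rw [hη]; field_simp
    have hGsum : ∑ j, Gf l0 l1 l2 (η αbar j) (β j)
        = (∑ j, (∑ i, X i j * αbar i) * β j)
          + l0 * (∑ j, (if β j = 0 then (0:ℝ) else 1))
          + l1 * (∑ j, |β j|) + l2 * (∑ j, (β j)^2) := by
      rw [Finset.mul_sum, Finset.mul_sum, Finset.mul_sum,
        ← Finset.sum_add_distrib, ← Finset.sum_add_distrib, ← Finset.sum_add_distrib]
      refine Finset.sum_congr rfl fun j _ => ?_
      rw [Gf, hηe j]
      ring
    rw [hswap, hcard, hGsum]
    ring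
  -- the β-side equivalence
  have hβiff : (∀ β : Fin p → ℝ, L βbar αbar ≤ L β αbar) ↔
      (∀ j, ∀ t, Gf l0 l1 l2 (η αbar j) (βbar j) ≤ Gf l0 l1 l2 (η αbar j) t) := by
    constructor
    · intro h j t
      have h1 := h (Function.update βbar j t)
      rw [hLsep, hLsep] at h1
      have hupd : ∑ j', Gf l0 l1 l2 (η αbar j') (Function.update βbar j t j')
          = (∑ j' ∈ Finset.univ.erase j, Gf l0 l1 l2 (η αbar j') (βbar j'))
            + Gf l0 l1 l2 (η αbar j) t := by
        rw [← Finset.sum_erase_add _ _ (Finset.mem_univ j)]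
        congr 1
        · exact Finset.sum_congr rfl fun j' hj' => by
            rw [Function.update_of_ne (Finset.ne_of_mem_erase hj')]
        · rw [Function.update_self]
      have hsplit : ∑ j', Gf l0 l1 l2 (η αbar j') (βbar j')
          = (∑ j' ∈ Finset.univ.erase j, Gf l0 l1 l2 (η αbar j') (βbar j'))
            + Gf l0 l1 l2 (η αbar j) (βbar j) := by
        rw [← Finset.sum_erase_add _ _ (Finset.mem_univ j)]
      rw [hupd, hsplit] at h1
      linarith
    · intro h β
      rw [hLsep, hLsep]
      have := Finset.sum_le_sum (fun j (_ : j ∈ Finset.univ) => h j (β j))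
      linarith
  constructor
  · rintro ⟨hα, hβ⟩
    have hb := hαiff.mp hα
    have hc : ∀ j, (βbar j = 0 ∧ |η αbar j| ≤ (2 * Real.sqrt (l0 * l2) + l1) / (2 * l2)) ∨
        (βbar j = Real.sign (η αbar j) * (|η αbar j| - l1 / (2 * l2)) ∧
          (2 * Real.sqrt (l0 * l2) + l1) / (2 * l2) ≤ |η αbar j|) :=
      fun j => (scalar_lemma l0 l1 l2 hl0 hl1 hl2 (η αbar j) (βbar j)).mp
        (hβiff.mp hβ j)
    refine ⟨?_, hb, hc⟩
    intro β
    have h1 : L βbar αbar = P βbar := by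
      rw [hLP]
      have hz : ∑ i, (αbar i - ((∑ j, X i j * βbar j) - y i))^2 = 0 := by
        apply Finset.sum_eq_zero; intro i _; rw [hb i]; ring
      rw [hz]; ring
    have h2 : L β αbar ≤ P β := by
      rw [hLP]
      have := hD β αbar
      linarith
    have := hβ β
    linarith
  · rintro ⟨ha, hb, hc⟩
    exact ⟨hαiff.mpr hb, hβiff.mpr fun j =>
      (scalar_lemma l0 l1 l2 hl0 hl1 hl2 (η αbar j) (βbar j)).mpr (hc j)⟩
end

section
/- For the square-loss Lagrangian L, the minimax equality sup_{α ∈ ℝⁿ} inf_{β ∈ ℝᵖ} L(β, α) = inf_{β ∈ ℝᵖ} sup_{α ∈ ℝⁿ} L(β, α) (as an equality of extended real numbers) holds if and only if there exists a saddle point (β̄, ᾱ) ∈ ℝᵖ × ℝⁿ of L. -/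
open scoped Classical

/-- A lower semicontinuous real function attains its minimum on a nonempty compact set. -/
theorem lsc_min_on_compact {E : Type*} [TopologicalSpace E] {s : Set E}
    (hs : IsCompact s) (hne : s.Nonempty) {f : E → ℝ} (hf : LowerSemicontinuous f) :
    ∃ x ∈ s, ∀ z ∈ s, f x ≤ f z := by
  by_contra hcon
  push_neg at hcon
  have hz : ∀ x : s, ∃ z ∈ s, f z < f (x : E) := fun x => hcon x x.2
  choose z hzs hzlt using hz
  have hVo : ∀ x : s, IsOpen (f ⁻¹' Set.Ioi (f (z x))) := fun x => hf.isOpen_preimage _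
  have hcover : s ⊆ ⋃ x : s, f ⁻¹' Set.Ioi (f (z x)) := by
    intro w hw
    exact Set.mem_iUnion.2 ⟨⟨w, hw⟩, hzlt ⟨w, hw⟩⟩
  obtain ⟨t, ht⟩ := hs.elim_finite_subcover _ hVo hcover
  have htne : t.Nonempty := by
    obtain ⟨w, hw⟩ := hne
    obtain ⟨x, hx⟩ := Set.mem_iUnion₂.1 (ht hw)
    exact ⟨x, hx.1⟩
  obtain ⟨x₀, hx₀t, hmin⟩ := t.exists_min_image (fun x => f (z x)) htne
  obtain ⟨x₁, hx₁⟩ := Set.mem_iUnion₂.1 (ht (hzs x₀))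
  exact absurd (hmin x₁ hx₁.1) (not_le.2 hx₁.2)

/-- A lower semicontinuous coercive function on `Fin m → ℝ` attains a global minimum. -/
theorem exists_min_of_coercive {m : ℕ} {f : (Fin m → ℝ) → ℝ}
    (hf : LowerSemicontinuous f) {R : ℝ} (hR : 0 ≤ R)
    (hcoer : ∀ x : Fin m → ℝ, x ∉ Metric.closedBall (0 : Fin m → ℝ) R → f 0 < f x) :
    ∃ x, ∀ z, f x ≤ f z := by
  obtain ⟨x, hxs, hmin⟩ := lsc_min_on_compact (isCompact_closedBall (0 : Fin m → ℝ) R)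
    ⟨0, Metric.mem_closedBall_self hR⟩ hf
  refine ⟨x, fun z => ?_⟩
  by_cases hzs : z ∈ Metric.closedBall (0 : Fin m → ℝ) R
  · exact hmin z hzs
  · exact le_trans (hmin 0 (Metric.mem_closedBall_self hR)) (hcoer z hzs).le

/-- The (scaled) count of nonzero coordinates is lower semicontinuous. -/
theorem lsc_l0count (p : ℕ) (l0 : ℝ) (hl0 : 0 ≤ l0) :
    LowerSemicontinuous (fun β : Fin p → ℝ =>
      l0 * ((Finset.univ.filter fun j => β j ≠ 0).card : ℝ)) := by
  intro β c hc
  set S : Finset (Fin p) := Finset.univ.filter fun j => β j ≠ 0 with hS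
  have hopen : IsOpen {β' : Fin p → ℝ | ∀ j ∈ S, β' j ≠ 0} := by
    have heq : {β' : Fin p → ℝ | ∀ j ∈ S, β' j ≠ 0} = ⋂ j ∈ S, {β' | β' j ≠ 0} := by
      ext β'; simp
    rw [heq]
    exact isOpen_biInter_finset fun j _ =>
      (isOpen_compl_singleton).preimage (continuous_apply j)
  have hmem : β ∈ {β' : Fin p → ℝ | ∀ j ∈ S, β' j ≠ 0} := by
    intro j hj
    exact (Finset.mem_filter.1 hj).2
  filter_upwards [hopen.mem_nhds hmem] with β' hβ'
  refine lt_of_lt_of_le hc ?_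
  have hsub : S ⊆ Finset.univ.filter fun j => β' j ≠ 0 := by
    intro j hj
    exact Finset.mem_filter.2 ⟨Finset.mem_univ j, hβ' j hj⟩
  have := Finset.card_le_card hsub
  have : (S.card : ℝ) ≤ ((Finset.univ.filter fun j => β' j ≠ 0).card : ℝ) := by
    exact_mod_cast this
  exact mul_le_mul_of_nonneg_left this hl0

/-- lsc + continuous is lsc. -/
theorem lsc_add_cont {E : Type*} [TopologicalSpace E] {f g : E → ℝ}
    (hf : LowerSemicontinuous f) (hg : Continuous g) :
    LowerSemicontinuous (fun x => f x + g x) := by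
  intro x c hc
  replace hc : c < f x + g x := hc
  set δ : ℝ := (f x + g x - c) / 2 with hδ
  have hδpos : 0 < δ := by simp only [hδ]; linarith
  have h1 : ∀ᶠ x' in nhds x, f x - δ < f x' := hf x _ (by linarith)
  have h2 : ∀ᶠ x' in nhds x, g x' ∈ Set.Ioi (g x - δ) :=
    (hg.continuousAt).preimage_mem_nhds (Ioi_mem_nhds (by linarith))
  filter_upwards [h1, h2] with x' hx1 hx2
  have : g x - δ < g x' := hx2
  linarith
set_option maxHeartbeats 2000000 in
/-- For the square-loss Lagrangian L, the minimax equality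
sup_α inf_β L(β,α) = inf_β sup_α L(β,α) (in the extended reals) holds iff
there exists a saddle point of L. -/
theorem statement_10 (l0 l1 l2 : ℝ) (hl0 : 0 < l0) (hl1 : 0 < l1) (hl2 : 0 < l2)
    (n p : ℕ) (X : Matrix (Fin n) (Fin p) ℝ) (y : Fin n → ℝ)
    (L : (Fin p → ℝ) → (Fin n → ℝ) → ℝ)
    (hL : ∀ (β : Fin p → ℝ) (α : Fin n → ℝ), L β α =
      (∑ i, α i * ∑ j, X i j * β j)
        - (1 / 2) * (∑ i, (α i) ^ 2) - (∑ i, y i * α i)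
        + l0 * ((Finset.univ.filter fun j => β j ≠ 0).card : ℝ)
        + l1 * (∑ j, |β j|)
        + l2 * (∑ j, (β j) ^ 2)) :
    ((⨆ α : Fin n → ℝ, ⨅ β : Fin p → ℝ, ((L β α : ℝ) : EReal)) =
      ⨅ β : Fin p → ℝ, ⨆ α : Fin n → ℝ, ((L β α : ℝ) : EReal)) ↔
      (∃ (βbar : Fin p → ℝ) (αbar : Fin n → ℝ),
        (∀ α : Fin n → ℝ, L βbar α ≤ L βbar αbar) ∧
        (∀ β : Fin p → ℝ, L βbar αbar ≤ L β αbar)) := by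
  -- notation
  set cnt : (Fin p → ℝ) → ℝ :=
    fun β => ((Finset.univ.filter fun j => β j ≠ 0).card : ℝ) with hcnt
  set dd : (Fin p → ℝ) → (Fin n → ℝ) := fun β i => (∑ j, X i j * β j) - y i with hdd
  have hcnt_nonneg : ∀ β, 0 ≤ cnt β := fun β => Nat.cast_nonneg _
  have habs_nonneg : ∀ β : Fin p → ℝ, 0 ≤ ∑ j, |β j| :=
    fun β => Finset.sum_nonneg fun j _ => abs_nonneg _
  have hsq_nonneg : ∀ β : Fin p → ℝ, 0 ≤ ∑ j, (β j) ^ 2 :=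
    fun β => Finset.sum_nonneg fun j _ => sq_nonneg _
  have hasq_nonneg : ∀ α : Fin n → ℝ, 0 ≤ ∑ i, (α i) ^ 2 :=
    fun α => Finset.sum_nonneg fun i _ => sq_nonneg _
  -- key reformulation of L
  have keyL : ∀ (β : Fin p → ℝ) (α : Fin n → ℝ), L β α =
      (∑ i, (α i * dd β i - (1 / 2) * (α i) ^ 2))
        + (l0 * cnt β + l1 * (∑ j, |β j|) + l2 * (∑ j, (β j) ^ 2)) := by
    intro β α
    have e1 : ∑ i, (α i * dd β i - (1 / 2) * (α i) ^ 2) =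
        (∑ i, α i * ∑ j, X i j * β j) - (1 / 2) * (∑ i, (α i) ^ 2)
          - ∑ i, y i * α i := by
      rw [Finset.mul_sum, ← Finset.sum_sub_distrib, ← Finset.sum_sub_distrib]
      refine Finset.sum_congr rfl fun i _ => ?_
      simp only [hdd]
      ring
    rw [hL β α, e1, hcnt]
    ring
  -- sup over α attained at dd β
  have hg : ∀ (β : Fin p → ℝ) (α : Fin n → ℝ), L β α ≤ L β (dd β) := by
    intro β α
    rw [keyL β α, keyL β (dd β)]
    refine add_le_add (Finset.sum_le_sum fun i _ => ?_) le_rfl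
    obtain ⟨d, hd⟩ : ∃ d, dd β i = d := ⟨_, rfl⟩
    rw [hd]
    nlinarith [sq_nonneg (α i - d)]
  -- continuity of L β · in α
  have contdd : ∀ i, Continuous fun β : Fin p → ℝ => dd β i := by
    intro i
    exact (continuous_finset_sum _ fun j _ =>
      continuous_const.mul (continuous_apply j)).sub continuous_const
  have contL : ∀ β : Fin p → ℝ, Continuous fun α : Fin n → ℝ => L β α := by
    intro β
    have : (fun α : Fin n → ℝ => L β α) =
        fun α => (∑ i, (α i * dd β i - (1 / 2) * (α i) ^ 2))
          + (l0 * cnt β + l1 * (∑ j, |β j|) + l2 * (∑ j, (β j) ^ 2)) :=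
      funext fun α => keyL β α
    rw [this]
    exact (continuous_finset_sum _ fun i _ =>
      ((continuous_apply i).mul continuous_const).sub
        (continuous_const.mul ((continuous_apply i).pow 2))).add continuous_const
  -- lower semicontinuity of L · α in β
  have lscL : ∀ α : Fin n → ℝ, LowerSemicontinuous fun β : Fin p → ℝ => L β α := by
    intro α
    have heq : (fun β : Fin p → ℝ => L β α) =
        fun β => l0 * cnt β +
          ((∑ i, α i * ∑ j, X i j * β j) - (1 / 2) * (∑ i, (α i) ^ 2)
            - (∑ i, y i * α i) + l1 * (∑ j, |β j|) + l2 * (∑ j, (β j) ^ 2)) := by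
      funext β
      rw [hL β α, hcnt]
      ring
    rw [heq]
    refine lsc_add_cont (lsc_l0count p l0 hl0.le) ?_
    refine ((((continuous_finset_sum _ fun i _ => continuous_const.mul
        (continuous_finset_sum _ fun j _ => continuous_const.mul
          (continuous_apply j))).sub continuous_const).sub continuous_const).add
        (continuous_const.mul (continuous_finset_sum _ fun j _ =>
          (continuous_apply j).abs))).add
        (continuous_const.mul (continuous_finset_sum _ fun j _ =>
          (continuous_apply j).pow 2))
  -- swap of sums
  have csum : ∀ (α : Fin n → ℝ) (β : Fin p → ℝ),
      ∑ i, α i * ∑ j, X i j * β j = ∑ j, (∑ i, α i * X i j) * β j := by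
    intro α β
    calc ∑ i, α i * ∑ j, X i j * β j = ∑ i, ∑ j, α i * X i j * β j := by
          refine Finset.sum_congr rfl fun i _ => ?_
          rw [Finset.mul_sum]
          exact Finset.sum_congr rfl fun j _ => by ring
      _ = ∑ j, ∑ i, α i * X i j * β j := Finset.sum_comm
      _ = ∑ j, (∑ i, α i * X i j) * β j := by
          refine Finset.sum_congr rfl fun j _ => ?_
          rw [Finset.sum_mul]
  -- value of L at β = 0
  have hL0 : ∀ α : Fin n → ℝ,
      L 0 α = -((1 / 2) * ∑ i, (α i) ^ 2) - ∑ i, y i * α i := by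
    intro α
    rw [hL 0 α]
    simp
  -- value of L at α = 0
  have hLa0 : ∀ β : Fin p → ℝ,
      L β 0 = l0 * cnt β + l1 * (∑ j, |β j|) + l2 * (∑ j, (β j) ^ 2) := by
    intro β
    rw [hL β 0, hcnt]
    simp
  -- helper: escaping the ball means a large coordinate
  have hball : ∀ {m : ℕ} (R : ℝ) (x : Fin m → ℝ), 0 ≤ R →
      x ∉ Metric.closedBall (0 : Fin m → ℝ) R → R ^ 2 < ∑ i, (x i) ^ 2 := by
    intro m R x hR hx
    rw [Metric.mem_closedBall, dist_zero_right] at hx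
    have : ¬ ∀ i, ‖x i‖ ≤ R := fun hall => hx ((pi_norm_le_iff_of_nonneg hR).2 hall)
    push_neg at this
    obtain ⟨i, hi⟩ := this
    rw [Real.norm_eq_abs] at hi
    have h1 : R ^ 2 < (x i) ^ 2 := by nlinarith [abs_nonneg (x i), sq_abs (x i)]
    exact lt_of_lt_of_le h1 (Finset.single_le_sum (f := fun i => (x i) ^ 2)
      (fun i _ => sq_nonneg _) (Finset.mem_univ i))
  -- minimizer in β for each fixed α
  have hmin : ∀ α : Fin n → ℝ, ∃ βm : Fin p → ℝ, ∀ β, L βm α ≤ L β α := by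
    intro α
    set c : Fin p → ℝ := fun j => ∑ i, α i * X i j with hc
    set C : ℝ := ∑ j, (c j) ^ 2 with hC
    have hC0 : 0 ≤ C := Finset.sum_nonneg fun j _ => sq_nonneg _
    set R : ℝ := Real.sqrt (C / l2 ^ 2 + 1) with hR
    have hRnn : 0 ≤ R := Real.sqrt_nonneg _
    have hR2 : R ^ 2 = C / l2 ^ 2 + 1 := Real.sq_sqrt (by positivity)
    refine exists_min_of_coercive (lscL α) hRnn ?_
    intro β hβ
    have hssq : C / l2 ^ 2 + 1 < ∑ j, (β j) ^ 2 := hR2 ▸ hball R β hRnn hβ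
    have hC2 : C + l2 ^ 2 < l2 ^ 2 * ∑ j, (β j) ^ 2 := by
      have := mul_lt_mul_of_pos_left hssq (show (0:ℝ) < l2 ^ 2 by positivity)
      have heq : l2 ^ 2 * (C / l2 ^ 2 + 1) = C + l2 ^ 2 := by field_simp
      linarith [heq ▸ this]
    have hsum : -C ≤ 2 * l2 * (∑ j, c j * β j) + l2 ^ 2 * ∑ j, (β j) ^ 2 := by
      have hterm : ∀ j ∈ Finset.univ, -((c j) ^ 2) ≤
          2 * l2 * (c j * β j) + l2 ^ 2 * (β j) ^ 2 := by
        intro j _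
        nlinarith [sq_nonneg (l2 * β j + c j)]
      have := Finset.sum_le_sum hterm
      simp only [Finset.sum_add_distrib, Finset.sum_neg_distrib, ← Finset.mul_sum] at this
      rw [hC]
      linarith
    have eβ : L β α = (∑ j, c j * β j) - (1 / 2) * (∑ i, (α i) ^ 2)
        - (∑ i, y i * α i) + l0 * cnt β + l1 * (∑ j, |β j|)
        + l2 * (∑ j, (β j) ^ 2) := by
      rw [hL β α, csum α β, hcnt, hc]
    have e0 := hL0 α
    have key : 0 < 2 * l2 * (L β α - L 0 α) := by
      have expand : 2 * l2 * (L β α - L 0 α) =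
          (2 * l2 * (∑ j, c j * β j) + l2 ^ 2 * ∑ j, (β j) ^ 2)
            + 2 * l2 * (l0 * cnt β) + 2 * l2 * (l1 * ∑ j, |β j|)
            + l2 ^ 2 * ∑ j, (β j) ^ 2 := by
        rw [eβ, e0]
        ring
      have t1 : 0 ≤ 2 * l2 * (l0 * cnt β) := by
        have := hcnt_nonneg β
        positivity
      have t2 : 0 ≤ 2 * l2 * (l1 * ∑ j, |β j|) := by
        have := habs_nonneg β
        positivity
      have hl22 : 0 < l2 ^ 2 := by positivity
      rw [expand]
      linarith
    nlinarith [key, hl2]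
  choose βm hβm using hmin
  set h : (Fin n → ℝ) → ℝ := fun α => L (βm α) α with hh
  -- maximizer in α of h := inf_β L
  have hmax : ∃ αbar, ∀ α, h α ≤ h αbar := by
    set Y : ℝ := ∑ i, (y i) ^ 2 with hY
    have hY0 : 0 ≤ Y := Finset.sum_nonneg fun i _ => sq_nonneg _
    set R : ℝ := Real.sqrt (4 * Y + 1) with hR
    have hRnn : 0 ≤ R := Real.sqrt_nonneg _
    have hR2 : R ^ 2 = 4 * Y + 1 := Real.sq_sqrt (by positivity)
    have hlsc : LowerSemicontinuous fun α => -(h α) := by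
      intro α₀ cc hcc
      replace hcc : cc < -(L (βm α₀) α₀) := hcc
      have hcont : Continuous fun α : Fin n → ℝ => -(L (βm α₀) α) := (contL _).neg
      have hev : ∀ᶠ α' in nhds α₀, -(L (βm α₀) α') ∈ Set.Ioi cc :=
        hcont.continuousAt.preimage_mem_nhds (Ioi_mem_nhds hcc)
      filter_upwards [hev] with α' hα'
      have h1 : h α' ≤ L (βm α₀) α' := hβm α' (βm α₀)
      exact lt_of_lt_of_le hα' (neg_le_neg h1)
    have hcoer : ∀ α : Fin n → ℝ, α ∉ Metric.closedBall (0 : Fin n → ℝ) R →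
        -(h 0) < -(h α) := by
      intro α hα
      have hssq : 4 * Y + 1 < ∑ i, (α i) ^ 2 := hR2 ▸ hball R α hRnn hα
      have h0 : 0 ≤ h 0 := by
        have e : h 0 = L (βm 0) 0 := rfl
        rw [e, hLa0]
        have := hcnt_nonneg (βm 0)
        have := habs_nonneg (βm 0)
        have := hsq_nonneg (βm 0)
        positivity
      have hub : h α ≤ L 0 α := hβm α 0
      have hq : -((1:ℝ)/4 * ∑ i, (α i) ^ 2) + Y
          - (-((1:ℝ)/2 * ∑ i, (α i) ^ 2) - ∑ i, y i * α i)
          = ∑ i, ((1/4) * (α i) ^ 2 + y i * α i + (y i) ^ 2) := by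
        rw [hY, Finset.sum_add_distrib, Finset.sum_add_distrib, ← Finset.mul_sum]
        ring
      have hq0 : 0 ≤ ∑ i, ((1/4) * (α i) ^ 2 + y i * α i + (y i) ^ 2) :=
        Finset.sum_nonneg fun i _ => by nlinarith [sq_nonneg (α i / 2 + y i)]
      have hLa : L 0 α ≤ -((1:ℝ)/4 * ∑ i, (α i) ^ 2) + Y := by
        rw [hL0 α]
        linarith
      have : L 0 α < 0 := by linarith
      have : h α < 0 := lt_of_le_of_lt hub this
      linarith
    obtain ⟨αbar, hαbar⟩ := exists_min_of_coercive hlsc hRnn hcoer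
    exact ⟨αbar, fun α => by have := hαbar α; linarith⟩
  obtain ⟨αbar, hαbar⟩ := hmax
  -- minimizer in β of g := sup_α L
  set g : (Fin p → ℝ) → ℝ := fun β => L β (dd β) with hgdef
  have hgmin : ∃ βbar, ∀ β, g βbar ≤ g β := by
    set Y : ℝ := ∑ i, (y i) ^ 2 with hY
    have hY0 : 0 ≤ Y := Finset.sum_nonneg fun i _ => sq_nonneg _
    have hg0 : g 0 = (1 / 2) * Y := by
      have e0 : g 0 = L 0 (dd 0) := rfl
      rw [e0, keyL]
      have e : ∀ i ∈ Finset.univ, dd 0 i * dd 0 i - (1/2) * (dd 0 i) ^ 2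
          = (1/2) * (y i) ^ 2 := by
        intro i _
        have hddi : dd 0 i = -(y i) := by simp [hdd]
        rw [hddi]
        ring
      rw [Finset.sum_congr rfl e, ← Finset.mul_sum, ← hY]
      have hc0 : cnt 0 = 0 := by simp [hcnt]
      rw [hc0]
      simp
    have hglb : ∀ β, l2 * ∑ j, (β j) ^ 2 ≤ g β := by
      intro β
      have e0 : g β = L β (dd β) := rfl
      rw [e0, keyL]
      have h1 : 0 ≤ ∑ i, (dd β i * dd β i - (1/2) * (dd β i) ^ 2) :=
        Finset.sum_nonneg fun i _ => by nlinarith [sq_nonneg (dd β i)]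
      have h2 := mul_nonneg hl0.le (hcnt_nonneg β)
      have h3 := mul_nonneg hl1.le (habs_nonneg β)
      linarith
    have hlscg : LowerSemicontinuous g := by
      have heq : g = fun β => l0 * cnt β +
          ((∑ i, (dd β i * dd β i - (1/2) * (dd β i) ^ 2))
            + l1 * (∑ j, |β j|) + l2 * (∑ j, (β j) ^ 2)) := by
        funext β
        have e0 : g β = L β (dd β) := rfl
        rw [e0, keyL]
        ring
      rw [heq]
      refine lsc_add_cont (lsc_l0count p l0 hl0.le) ?_
      exact ((continuous_finset_sum _ fun i _ =>
        ((contdd i).mul (contdd i)).sub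
          (continuous_const.mul ((contdd i).pow 2))).add
        (continuous_const.mul (continuous_finset_sum _ fun j _ =>
          (continuous_apply j).abs))).add
        (continuous_const.mul (continuous_finset_sum _ fun j _ =>
          (continuous_apply j).pow 2))
    set R : ℝ := Real.sqrt (((1/2) * Y) / l2 + 1) with hR
    have hRnn : 0 ≤ R := Real.sqrt_nonneg _
    have hR2 : R ^ 2 = ((1/2) * Y) / l2 + 1 := Real.sq_sqrt (by positivity)
    refine exists_min_of_coercive hlscg hRnn ?_
    intro β hβ
    have hssq : ((1/2) * Y) / l2 + 1 < ∑ j, (β j) ^ 2 := hR2 ▸ hball R β hRnn hβ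
    have hkey : (1/2) * Y + l2 < l2 * ∑ j, (β j) ^ 2 := by
      have := mul_lt_mul_of_pos_left hssq hl2
      have heq2 : l2 * (((1/2) * Y) / l2 + 1) = (1/2) * Y + l2 := by
        field_simp
      linarith [heq2 ▸ this]
    have := hglb β
    rw [hg0]
    linarith
  obtain ⟨βbar, hβbar⟩ := hgmin
  -- identification of the inner optima in EReal
  have hIi : ∀ α : Fin n → ℝ,
      (⨅ β : Fin p → ℝ, ((L β α : ℝ) : EReal)) = ((h α : ℝ) : EReal) := by
    intro α
    refine le_antisymm (iInf_le _ (βm α)) (le_iInf fun β => ?_)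
    exact EReal.coe_le_coe_iff.2 (hβm α β)
  have hSs : ∀ β : Fin p → ℝ,
      (⨆ α : Fin n → ℝ, ((L β α : ℝ) : EReal)) = ((g β : ℝ) : EReal) := by
    intro β
    refine le_antisymm (iSup_le fun α => EReal.coe_le_coe_iff.2 (hg β α)) ?_
    exact le_iSup (fun α => ((L β α : ℝ) : EReal)) (dd β)
  have hA : (⨆ α : Fin n → ℝ, ⨅ β : Fin p → ℝ, ((L β α : ℝ) : EReal))
      = ((h αbar : ℝ) : EReal) := by
    rw [iSup_congr hIi]
    refine le_antisymm (iSup_le fun α => EReal.coe_le_coe_iff.2 (hαbar α)) ?_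
    exact le_iSup (fun α => ((h α : ℝ) : EReal)) αbar
  have hB : (⨅ β : Fin p → ℝ, ⨆ α : Fin n → ℝ, ((L β α : ℝ) : EReal))
      = ((g βbar : ℝ) : EReal) := by
    rw [iInf_congr hSs]
    refine le_antisymm (iInf_le _ βbar) (le_iInf fun β => ?_)
    exact EReal.coe_le_coe_iff.2 (hβbar β)
  constructor
  · intro heq
    have hval : h αbar = g βbar := EReal.coe_eq_coe_iff.1 (by rw [← hA, ← hB, heq])
    have h1 : h αbar ≤ L βbar αbar := hβm αbar βbar
    have h2 : L βbar αbar ≤ g βbar := hg βbar αbar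
    have hLv : L βbar αbar = g βbar := le_antisymm h2 (hval ▸ h1)
    refine ⟨βbar, αbar, fun α => ?_, fun β => ?_⟩
    · calc L βbar α ≤ g βbar := hg βbar α
        _ = L βbar αbar := hLv.symm
    · calc L βbar αbar = h αbar := by rw [hLv, ← hval]
        _ ≤ L β αbar := hβm αbar β
  · rintro ⟨βb, αb, hs1, hs2⟩
    refine le_antisymm (iSup_iInf_le_iInf_iSup fun α β => ((L β α : ℝ) : EReal)) ?_
    have e1 : (⨆ α : Fin n → ℝ, ((L βb α : ℝ) : EReal)) = ((L βb αb : ℝ) : EReal) :=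
      le_antisymm (iSup_le fun α => EReal.coe_le_coe_iff.2 (hs1 α))
        (le_iSup (fun α => ((L βb α : ℝ) : EReal)) αb)
    have e2 : (⨅ β : Fin p → ℝ, ((L β αb : ℝ) : EReal)) = ((L βb αb : ℝ) : EReal) :=
      le_antisymm (iInf_le _ βb) (le_iInf fun β => EReal.coe_le_coe_iff.2 (hs2 β))
    calc (⨅ β : Fin p → ℝ, ⨆ α : Fin n → ℝ, ((L β α : ℝ) : EReal))
        ≤ ⨆ α : Fin n → ℝ, ((L βb α : ℝ) : EReal) :=
          iInf_le (fun β => ⨆ α : Fin n → ℝ, ((L β α : ℝ) : EReal)) βb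
      _ = ((L βb αb : ℝ) : EReal) := e1
      _ = ⨅ β : Fin p → ℝ, ((L β αb : ℝ) : EReal) := e2.symm
      _ ≤ ⨆ α : Fin n → ℝ, ⨅ β : Fin p → ℝ, ((L β α : ℝ) : EReal) :=
          le_iSup (fun α => ⨅ β : Fin p → ℝ, ((L β α : ℝ) : EReal)) αb
end

section
/- (Strong duality for the square loss.) For β̄ ∈ ℝᵖ and ᾱ ∈ ℝⁿ, the pair satisfies [ᾱ maximizes D over ℝⁿ, i.e. D(α) ≤ D(ᾱ) for all α ∈ ℝⁿ, and P(β̄) = D(ᾱ)] if and only if the following three conditions hold: (a) β̄ minimizes P over ℝᵖ; (b) ᾱ = Xβ̄ − y; (c) the link condition holds: for every j ∈ {1,…,p}, either β̄_j = 0 and |η_j(ᾱ)| ≤ η₀, or β̄_j = sign(η_j(ᾱ))·(|η_j(ᾱ)| − λ₁/(2λ₂)) and |η_j(ᾱ)| ≥ η₀. -/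
open scoped Classical


noncomputable def gapF (l0 l1 l2 t b : ℝ) : ℝ :=
  t * b + l1 * |b| + l2 * b ^ 2 + l0 * (if b = 0 then 0 else 1)
    - (if 2 * Real.sqrt (l0 * l2) + l1 < |t| then l0 - (|t| - l1) ^ 2 / (4 * l2) else 0)

lemma gap_nonneg (l0 l1 l2 : ℝ) (hl0 : 0 < l0) (hl1 : 0 < l1) (hl2 : 0 < l2)
    (t b : ℝ) : 0 ≤ gapF l0 l1 l2 t b := by
  have hs : Real.sqrt (l0 * l2) ^ 2 = l0 * l2 := Real.sq_sqrt (by positivity)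
  have hsp : 0 < Real.sqrt (l0 * l2) := Real.sqrt_pos.2 (by positivity)
  have h4 : (0:ℝ) < 4 * l2 := by linarith
  unfold gapF
  rcases eq_or_ne b 0 with hb | hb
  · subst hb
    rw [if_pos rfl]
    rcases lt_or_ge (2 * Real.sqrt (l0 * l2) + l1) |t| with h | h
    · rw [if_pos h]
      have hq : l0 ≤ (|t| - l1) ^ 2 / (4 * l2) := by
        rw [le_div_iff₀ h4]; nlinarith [abs_nonneg t]
      simp only [mul_zero, abs_zero, ne_eq]
      nlinarith [hq]
    · rw [if_neg (not_lt.2 h)]; simp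
  · rw [if_neg hb]
    have htb : -( |t| * |b| ) ≤ t * b := by
      have := neg_abs_le (t * b)
      rwa [abs_mul] at this
    have hbsq : b ^ 2 = |b| ^ 2 := (sq_abs b).symm
    split_ifs with h
    · have key : (|t| - l1) * |b| - l2 * |b| ^ 2 ≤ (|t| - l1) ^ 2 / (4 * l2) := by
        rw [le_div_iff₀ h4]
        nlinarith [sq_nonneg (2 * l2 * |b| - (|t| - l1))]
      nlinarith [key, htb]
    · push_neg at h
      have hu : 0 < |b| := abs_pos.2 hb
      have hl0s : Real.sqrt l0 ^ 2 = l0 := Real.sq_sqrt hl0.le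
      have hl2s : Real.sqrt l2 ^ 2 = l2 := Real.sq_sqrt hl2.le
      have hmul : Real.sqrt (l0 * l2) = Real.sqrt l0 * Real.sqrt l2 :=
        Real.sqrt_mul hl0.le l2
      nlinarith [sq_nonneg (Real.sqrt l2 * |b| - Real.sqrt l0), abs_nonneg t,
        mul_nonneg (abs_nonneg b) (sub_nonneg.2 h), Real.sqrt_nonneg l0, Real.sqrt_nonneg l2]

set_option maxHeartbeats 1000000 in
lemma gap_eq_zero_iff (l0 l1 l2 : ℝ) (hl0 : 0 < l0) (hl1 : 0 < l1) (hl2 : 0 < l2)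
    (t b : ℝ) : gapF l0 l1 l2 t b = 0 ↔
      (b = 0 ∧ |t| ≤ 2 * Real.sqrt (l0 * l2) + l1) ∨
      (b = -Real.sign t * ((|t| - l1) / (2 * l2)) ∧
        2 * Real.sqrt (l0 * l2) + l1 ≤ |t|) := by
  have hs : Real.sqrt (l0 * l2) ^ 2 = l0 * l2 := Real.sq_sqrt (by positivity)
  have hsp : 0 < Real.sqrt (l0 * l2) := Real.sqrt_pos.2 (by positivity)
  have h4 : (0:ℝ) < 4 * l2 := by linarith
  have h2 : (0:ℝ) < 2 * l2 := by linarith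
  have hφeq : 2 * Real.sqrt (l0 * l2) + l1 ≤ |t| →
      (if 2 * Real.sqrt (l0 * l2) + l1 < |t| then l0 - (|t| - l1) ^ 2 / (4 * l2) else 0)
        = l0 - (|t| - l1) ^ 2 / (4 * l2) := by
    intro hc
    rcases eq_or_lt_of_le hc with hceq | hclt
    · rw [if_neg (by rw [← hceq]; exact lt_irrefl _)]
      have habs : |t| - l1 = 2 * Real.sqrt (l0 * l2) := by linarith
      rw [habs]
      have h9 : (2 * Real.sqrt (l0 * l2)) ^ 2 = 4 * (l0 * l2) := by nlinarith [hs]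
      rw [h9]
      field_simp
      ring
    · rw [if_pos hclt]
  constructor
  · intro hgap
    rcases eq_or_ne b 0 with hb | hb
    · left
      refine ⟨hb, ?_⟩
      by_contra hcon
      push_neg at hcon
      unfold gapF at hgap
      rw [hb, if_pos rfl, if_pos hcon] at hgap
      have heq : (|t| - l1) ^ 2 = l0 * (4 * l2) := by
        have h5 : (|t| - l1) ^ 2 / (4 * l2) = l0 := by
          simp only [mul_zero, zero_mul, abs_zero, ne_eq] at hgap
          linarith
        field_simp at h5
        linarith [h5]
      nlinarith [hcon, hsp]
    · right
      have htb : -( |t| * |b| ) ≤ t * b := by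
        have := neg_abs_le (t * b)
        rwa [abs_mul] at this
      have hbsq : b ^ 2 = |b| ^ 2 := (sq_abs b).symm
      have hu : 0 < |b| := abs_pos.2 hb
      have hc : 2 * Real.sqrt (l0 * l2) + l1 ≤ |t| := by
        by_contra hcon
        push_neg at hcon
        unfold gapF at hgap
        rw [if_neg hb, if_neg (not_lt.2 hcon.le)] at hgap
        have hl0s : Real.sqrt l0 ^ 2 = l0 := Real.sq_sqrt hl0.le
        have hl2s : Real.sqrt l2 ^ 2 = l2 := Real.sq_sqrt hl2.le
        have hmul : Real.sqrt (l0 * l2) = Real.sqrt l0 * Real.sqrt l2 :=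
          Real.sqrt_mul hl0.le l2
        have hstrict : (|t| - l1) * |b| < 2 * Real.sqrt (l0 * l2) * |b| :=
          mul_lt_mul_of_pos_right (by linarith) hu
        nlinarith [sq_nonneg (Real.sqrt l2 * |b| - Real.sqrt l0), htb, hstrict,
          Real.sqrt_nonneg l0, Real.sqrt_nonneg l2]
      refine ⟨?_, hc⟩
      set u0 := (|t| - l1) / (2 * l2) with hu0def
      have hu0 : 0 < u0 := by
        apply div_pos _ h2
        linarith [hc, hsp, hl1]
      have hgap2 : (t * b + |t| * |b|) + l2 * (|b| - u0) ^ 2 = 0 := by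
        unfold gapF at hgap
        rw [if_neg hb, hφeq hc] at hgap
        have hexp : l2 * (|b| - u0) ^ 2
            = l2 * |b| ^ 2 - (|t| - l1) * |b| + (|t| - l1) ^ 2 / (4 * l2) := by
          rw [hu0def]; field_simp; ring
        nlinarith [hgap, hexp, hbsq]
      have hA : 0 ≤ t * b + |t| * |b| := by linarith
      have hB : 0 ≤ l2 * (|b| - u0) ^ 2 := by positivity
      have hA0 : t * b + |t| * |b| = 0 := by linarith
      have hB0 : |b| = u0 := by
        have : (|b| - u0) ^ 2 = 0 := by nlinarith
        have := pow_eq_zero_iff (n := 2) (by norm_num) |>.1 this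
        linarith
      have ht0 : t ≠ 0 := by
        intro h0
        rw [h0, abs_zero] at hc
        linarith [hc, hsp, hl1]
      rcases lt_trichotomy t 0 with htneg | hteq | htpos
      · rw [Real.sign_of_neg htneg]
        have habs : |t| = -t := abs_of_neg htneg
        rw [habs] at hA0
        have : t * (b - u0) = 0 := by rw [← hB0]; ring_nf; linarith [hA0]
        have hb' : b = u0 := by
          rcases mul_eq_zero.1 this with h | h
          · exact absurd h ht0
          · linarith
        rw [hb']; ring
      · exact absurd hteq ht0
      · rw [Real.sign_of_pos htpos]
        have habs : |t| = t := abs_of_pos htpos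
        rw [habs] at hA0
        have : t * (b + u0) = 0 := by rw [← hB0]; ring_nf; linarith [hA0]
        have hb' : b = -u0 := by
          rcases mul_eq_zero.1 this with h | h
          · exact absurd h ht0
          · linarith
        rw [hb']; ring
  · rintro (⟨hb, hle⟩ | ⟨hb, hge⟩)
    · unfold gapF
      rw [hb, if_pos rfl, if_neg (not_lt.2 hle)]
      simp
    · unfold gapF
      have ht0 : t ≠ 0 := by
        intro h0
        rw [h0, abs_zero] at hge
        linarith [hge, hsp, hl1]
      have hu0 : 0 < (|t| - l1) / (2 * l2) := by
        apply div_pos _ h2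
        linarith [hge, hsp, hl1]
      have hbne : b ≠ 0 := by
        rcases lt_trichotomy t 0 with h | h | h
        · rw [hb, Real.sign_of_neg h]; positivity
        · exact absurd h ht0
        · rw [hb, Real.sign_of_pos h]
          simp only [neg_mul, one_mul, ne_eq, neg_eq_zero]
          exact ne_of_gt hu0
      rw [if_neg hbne, hφeq hge]
      rcases lt_trichotomy t 0 with h | h | h
      · rw [hb, Real.sign_of_neg h]
        have habs : |t| = -t := abs_of_neg h
        have habsb : |(-(-1) * ((|t| - l1) / (2 * l2)))| = (|t| - l1) / (2 * l2) := by
          rw [abs_of_pos (show (0:ℝ) < -(-1) * ((|t| - l1) / (2 * l2)) by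
            nlinarith [hu0])]
          ring
        rw [habsb]
        have hts : t = -|t| := by rw [habs]; ring
        obtain ⟨s, hgen⟩ : ∃ s, |t| = s := ⟨|t|, rfl⟩
        rw [hgen] at hts ⊢
        rw [hts]
        field_simp [hl2.ne']
        ring
      · exact absurd h ht0
      · rw [hb, Real.sign_of_pos h]
        have habs : |t| = t := abs_of_pos h
        have habsb : |(-(1:ℝ) * ((|t| - l1) / (2 * l2)))| = (|t| - l1) / (2 * l2) := by
          rw [abs_of_neg (show -(1:ℝ) * ((|t| - l1) / (2 * l2)) < 0 by
            nlinarith [hu0])]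
          ring
        rw [habsb]
        have hts : t = |t| := habs.symm
        obtain ⟨s, hgen⟩ : ∃ s, |t| = s := ⟨|t|, rfl⟩
        rw [hgen] at hts ⊢
        rw [hts]
        field_simp [hl2.ne']
        ring

set_option maxHeartbeats 1000000 in
/-- (Strong duality for the square loss.) [ᾱ maximizes D and
P(β̄) = D(ᾱ)] iff (a) β̄ minimizes P; (b) ᾱ = Xβ̄ − y; (c) the link condition. -/
theorem statement_11 (l0 l1 l2 : ℝ) (hl0 : 0 < l0) (hl1 : 0 < l1) (hl2 : 0 < l2)
    (n p : ℕ) (X : Matrix (Fin n) (Fin p) ℝ) (y : Fin n → ℝ)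
    (Φ : ℝ → ℝ)
    (hΦ : ∀ t : ℝ, Φ t =
      if 2 * Real.sqrt (l0 * l2) + l1 < |t| then l0 - (|t| - l1) ^ 2 / (4 * l2)
      else 0)
    (P : (Fin p → ℝ) → ℝ)
    (hP : ∀ β : Fin p → ℝ, P β =
      (1 / 2) * (∑ i, (y i - ∑ j, X i j * β j) ^ 2)
        + l1 * (∑ j, |β j|) + l2 * (∑ j, (β j) ^ 2)
        + l0 * ((Finset.univ.filter fun j => β j ≠ 0).card : ℝ))
    (D : (Fin n → ℝ) → ℝ)
    (hD : ∀ α : Fin n → ℝ, D α =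
      -(1 / 2) * (∑ i, (α i) ^ 2) - (∑ i, y i * α i)
        + ∑ j, Φ (∑ i, X i j * α i))
    (η : (Fin n → ℝ) → Fin p → ℝ)
    (hη : ∀ (α : Fin n → ℝ) (j : Fin p), η α j = -(∑ i, X i j * α i) / (2 * l2))
    (βbar : Fin p → ℝ) (αbar : Fin n → ℝ) :
    ((∀ α : Fin n → ℝ, D α ≤ D αbar) ∧ P βbar = D αbar) ↔
      ((∀ β : Fin p → ℝ, P βbar ≤ P β) ∧
       (∀ i, αbar i = (∑ j, X i j * βbar j) - y i) ∧
       (∀ j, (βbar j = 0 ∧ |η αbar j| ≤ (2 * Real.sqrt (l0 * l2) + l1) / (2 * l2)) ∨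
         (βbar j = Real.sign (η αbar j) * (|η αbar j| - l1 / (2 * l2)) ∧
           (2 * Real.sqrt (l0 * l2) + l1) / (2 * l2) ≤ |η αbar j|))) := by
  have h2 : (0:ℝ) < 2 * l2 := by linarith
  -- key identity
  have hswap : ∀ (β : Fin p → ℝ) (α : Fin n → ℝ),
      ∑ i, (∑ j, X i j * β j) * α i = ∑ j, (∑ i, X i j * α i) * β j := by
    intro β α
    simp_rw [Finset.sum_mul]
    rw [Finset.sum_comm]
    exact Finset.sum_congr rfl fun j _ => Finset.sum_congr rfl fun i _ => by ring
  have hcard : ∀ β : Fin p → ℝ,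
      ((Finset.univ.filter fun j => β j ≠ 0).card : ℝ)
        = ∑ j, (if β j = 0 then (0:ℝ) else 1) := by
    intro β
    rw [Finset.card_filter]
    push_cast
    exact Finset.sum_congr rfl fun j _ => by by_cases h : β j = 0 <;> simp [h]
  have hkey : ∀ (β : Fin p → ℝ) (α : Fin n → ℝ),
      P β - D α = (1/2) * (∑ i, ((y i - ∑ j, X i j * β j) + α i) ^ 2)
        + ∑ j, gapF l0 l1 l2 (∑ i, X i j * α i) (β j) := by
    intro β α
    have e1 : ∑ i, ((y i - ∑ j, X i j * β j) + α i) ^ 2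
        = ∑ i, (y i - ∑ j, X i j * β j) ^ 2
          + 2 * ∑ i, (y i - ∑ j, X i j * β j) * α i + ∑ i, (α i) ^ 2 := by
      rw [Finset.mul_sum, ← Finset.sum_add_distrib, ← Finset.sum_add_distrib]
      exact Finset.sum_congr rfl fun i _ => by ring
    have e2 : ∑ i, (y i - ∑ j, X i j * β j) * α i
        = ∑ i, y i * α i - ∑ j, (∑ i, X i j * α i) * β j := by
      rw [← hswap β α, ← Finset.sum_sub_distrib]
      exact Finset.sum_congr rfl fun i _ => by ring
    have e3 : ∑ j, gapF l0 l1 l2 (∑ i, X i j * α i) (β j)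
        = ∑ j, (∑ i, X i j * α i) * β j + l1 * ∑ j, |β j| + l2 * ∑ j, (β j) ^ 2
          + l0 * ∑ j, (if β j = 0 then (0:ℝ) else 1)
          - ∑ j, Φ (∑ i, X i j * α i) := by
      unfold gapF
      simp_rw [← hΦ]
      rw [Finset.sum_sub_distrib, Finset.sum_add_distrib, Finset.sum_add_distrib,
        Finset.sum_add_distrib, ← Finset.mul_sum, ← Finset.mul_sum, ← Finset.mul_sum]
    rw [hP, hD, e1, e2, e3, hcard β]
    ring
  -- weak duality
  have hweak : ∀ (β : Fin p → ℝ) (α : Fin n → ℝ), D α ≤ P β := by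
    intro β α
    have h1 : 0 ≤ (1/2) * (∑ i, ((y i - ∑ j, X i j * β j) + α i) ^ 2) :=
      mul_nonneg (by norm_num) (Finset.sum_nonneg fun i _ => sq_nonneg _)
    have h2' : 0 ≤ ∑ j, gapF l0 l1 l2 (∑ i, X i j * α i) (β j) :=
      Finset.sum_nonneg fun j _ => gap_nonneg l0 l1 l2 hl0 hl1 hl2 _ _
    linarith [hkey β α]
  -- equality characterization
  have heqiff : ∀ (β : Fin p → ℝ) (α : Fin n → ℝ), P β = D α ↔
      ((∀ i, α i = (∑ j, X i j * β j) - y i) ∧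
        ∀ j, gapF l0 l1 l2 (∑ i, X i j * α i) (β j) = 0) := by
    intro β α
    constructor
    · intro heq
      have h0 : (1/2) * (∑ i, ((y i - ∑ j, X i j * β j) + α i) ^ 2)
          + ∑ j, gapF l0 l1 l2 (∑ i, X i j * α i) (β j) = 0 := by
        have := hkey β α; linarith
      have h1 : 0 ≤ ∑ i, ((y i - ∑ j, X i j * β j) + α i) ^ 2 :=
        Finset.sum_nonneg fun i _ => sq_nonneg _
      have h2' : 0 ≤ ∑ j, gapF l0 l1 l2 (∑ i, X i j * α i) (β j) :=
        Finset.sum_nonneg fun j _ => gap_nonneg l0 l1 l2 hl0 hl1 hl2 _ _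
      have hsq0 : ∑ i, ((y i - ∑ j, X i j * β j) + α i) ^ 2 = 0 := by linarith
      have hgp0 : ∑ j, gapF l0 l1 l2 (∑ i, X i j * α i) (β j) = 0 := by linarith
      constructor
      · intro i
        have := (Finset.sum_eq_zero_iff_of_nonneg
          (fun i _ => sq_nonneg ((y i - ∑ j, X i j * β j) + α i))).1 hsq0 i
          (Finset.mem_univ i)
        have hz : (y i - ∑ j, X i j * β j) + α i = 0 :=
          pow_eq_zero_iff (n := 2) (by norm_num) |>.1 this
        linarith
      · intro j
        exact (Finset.sum_eq_zero_iff_of_nonneg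
          (fun j _ => gap_nonneg l0 l1 l2 hl0 hl1 hl2 _ _)).1 hgp0 j
          (Finset.mem_univ j)
    · rintro ⟨hα, hgp⟩
      have hsq0 : ∑ i, ((y i - ∑ j, X i j * β j) + α i) ^ 2 = 0 :=
        Finset.sum_eq_zero fun i _ => by rw [hα i]; ring
      have hgp0 : ∑ j, gapF l0 l1 l2 (∑ i, X i j * α i) (β j) = 0 :=
        Finset.sum_eq_zero fun j _ => hgp j
      have := hkey β α
      rw [hsq0, hgp0] at this
      linarith
  -- link condition bridge
  have hlink : ∀ j, gapF l0 l1 l2 (∑ i, X i j * αbar i) (βbar j) = 0 ↔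
      ((βbar j = 0 ∧ |η αbar j| ≤ (2 * Real.sqrt (l0 * l2) + l1) / (2 * l2)) ∨
       (βbar j = Real.sign (η αbar j) * (|η αbar j| - l1 / (2 * l2)) ∧
         (2 * Real.sqrt (l0 * l2) + l1) / (2 * l2) ≤ |η αbar j|)) := by
    intro j
    set t := ∑ i, X i j * αbar i with ht
    rw [gap_eq_zero_iff l0 l1 l2 hl0 hl1 hl2 t (βbar j)]
    have hηj : η αbar j = -t / (2 * l2) := hη αbar j
    have habsη : |η αbar j| = |t| / (2 * l2) := by
      rw [hηj, abs_div, abs_neg, abs_of_pos h2]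
    have hsignη : Real.sign (η αbar j) = -Real.sign t := by
      rcases lt_trichotomy t 0 with h | h | h
      · rw [Real.sign_of_neg h, hηj,
          Real.sign_of_pos (div_pos (neg_pos.2 h) h2)]
        norm_num
      · rw [hηj, h]
        simp [Real.sign_zero]
      · rw [Real.sign_of_pos h, hηj,
          Real.sign_of_neg (div_neg_of_neg_of_pos (neg_lt_zero.2 h) h2)]
    rw [habsη, hsignη]
    have he : -Real.sign t * (|t| / (2 * l2) - l1 / (2 * l2))
        = -Real.sign t * ((|t| - l1) / (2 * l2)) := by ring
    rw [he]
    exact or_congr (and_congr_right fun _ => (div_le_div_iff_of_pos_right h2).symm)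
      (and_congr_right fun _ => (div_le_div_iff_of_pos_right h2).symm)
  constructor
  · rintro ⟨hmax, heq⟩
    obtain ⟨hα, hgp⟩ := (heqiff βbar αbar).1 heq
    refine ⟨fun β => ?_, hα, fun j => (hlink j).1 (hgp j)⟩
    calc P βbar = D αbar := heq
      _ ≤ P β := hweak β αbar
  · rintro ⟨hmin, hα, hlk⟩
    have heq : P βbar = D αbar :=
      (heqiff βbar αbar).2 ⟨hα, fun j => (hlink j).2 (hlk j)⟩
    exact ⟨fun α => le_trans (hweak βbar α) (le_of_eq heq), heq⟩
end

section
/- (Duality-gap ball bound for the square loss.) Suppose ᾱ ∈ ℝⁿ maximizes D over ℝⁿ, i.e. D(α) ≤ D(ᾱ) for all α ∈ ℝⁿ. Then for every α ∈ ℝⁿ and every β ∈ ℝᵖ, ‖α − ᾱ‖² ≤ 2·(P(β) − D(α)). -/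
lemma lemA (l0 l1 l2 : ℝ) (hl0 : 0 < l0) (hl1 : 0 < l1) (hl2 : 0 < l2) (τ b : ℝ) :
    (if 2 * Real.sqrt (l0 * l2) + l1 < |τ| then l0 - (|τ| - l1) ^ 2 / (4 * l2) else 0)
      ≤ τ * b + (l1 * |b| + l2 * b ^ 2 + l0 * (if b = 0 then 0 else 1)) := by
  have hs0 : 0 ≤ Real.sqrt (l0 * l2) := Real.sqrt_nonneg _
  have hs : Real.sqrt (l0 * l2) ^ 2 = l0 * l2 := Real.sq_sqrt (by positivity)
  have key : -(|τ| * |b|) ≤ τ * b := by rw [← abs_mul]; exact neg_abs_le _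
  have h4 : (0:ℝ) < 4 * l2 := by linarith
  by_cases hτ : 2 * Real.sqrt (l0 * l2) + l1 < |τ|
  · rw [if_pos hτ]
    have h5 : 2 * Real.sqrt (l0 * l2) < |τ| - l1 := by linarith
    by_cases hb : b = 0
    · subst hb
      have hge : l0 ≤ (|τ| - l1) ^ 2 / (4 * l2) := by
        rw [le_div_iff₀ h4]
        nlinarith [hs, hs0, h5]
      simp only [mul_zero, zero_mul, abs_zero, if_pos rfl, add_zero, zero_add]
      norm_num
      linarith
    · rw [if_neg hb]
      have hdiv : (|τ| - l1) * |b| - l2 * b ^ 2 ≤ (|τ| - l1) ^ 2 / (4 * l2) := by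
        rw [le_div_iff₀ h4, ← sq_abs b]
        nlinarith [sq_nonneg (2 * l2 * |b| - (|τ| - l1))]
      nlinarith [key, hdiv]
  · rw [if_neg hτ]
    by_cases hb : b = 0
    · subst hb; simp
    · rw [if_neg hb]
      push_neg at hτ
      have hsplit : Real.sqrt l0 * Real.sqrt l2 = Real.sqrt (l0 * l2) :=
        (Real.sqrt_mul hl0.le l2).symm
      have h0 : Real.sqrt l0 ^ 2 = l0 := Real.sq_sqrt hl0.le
      have h2 : Real.sqrt l2 ^ 2 = l2 := Real.sq_sqrt hl2.le
      have h1 : 0 ≤ (2 * Real.sqrt (l0 * l2) + l1 - |τ|) * |b| :=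
        mul_nonneg (by linarith) (abs_nonneg b)
      have hsq : 0 ≤ l2 * |b| ^ 2 - 2 * Real.sqrt (l0 * l2) * |b| + l0 := by
        have expand : l2 * |b| ^ 2 - 2 * Real.sqrt (l0 * l2) * |b| + l0
            = (Real.sqrt l2 * |b| - Real.sqrt l0) ^ 2 := by
          linear_combination (-(|b| ^ 2)) * h2 - h0 + (2 * |b|) * hsplit
        rw [expand]; positivity
      rw [← sq_abs b]
      nlinarith [key, h1, hsq]

lemma lemB (l0 l1 l2 : ℝ) (hl0 : 0 < l0) (hl1 : 0 < l1) (hl2 : 0 < l2) (τ : ℝ) :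
    ∃ b : ℝ, (if 2 * Real.sqrt (l0 * l2) + l1 < |τ| then l0 - (|τ| - l1) ^ 2 / (4 * l2) else 0)
      = τ * b + (l1 * |b| + l2 * b ^ 2 + l0 * (if b = 0 then 0 else 1)) := by
  have hs0 : 0 ≤ Real.sqrt (l0 * l2) := Real.sqrt_nonneg _
  by_cases hτ : 2 * Real.sqrt (l0 * l2) + l1 < |τ|
  · have ht : l1 < |τ| := by linarith
    have hτne : τ ≠ 0 := by
      intro h; rw [h, abs_zero] at ht; linarith
    set c : ℝ := (|τ| - l1) / (2 * l2) with hc_def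
    have hc : 0 < c := div_pos (by linarith) (by linarith)
    rw [if_pos hτ]
    rcases lt_trichotomy τ 0 with hneg | hzero | hpos
    · refine ⟨c, ?_⟩
      rw [if_neg (ne_of_gt hc), abs_of_pos hc]
      have habs : |τ| = -τ := abs_of_neg hneg
      rw [habs] at hc_def ⊢
      rw [hc_def]
      field_simp
      ring
    · exact absurd hzero hτne
    · refine ⟨-c, ?_⟩
      rw [if_neg (by simpa using ne_of_gt hc : -c ≠ 0), abs_neg, abs_of_pos hc]
      have habs : |τ| = τ := abs_of_pos hpos
      rw [habs] at hc_def ⊢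
      rw [hc_def]
      field_simp
      ring
  · exact ⟨0, by simp [hτ]⟩

open scoped Classical

/-- (Duality-gap ball bound.) If ᾱ maximizes D over ℝⁿ, then for
every α ∈ ℝⁿ and β ∈ ℝᵖ, ‖α − ᾱ‖² ≤ 2·(P(β) − D(α)). -/
theorem statement_12 (l0 l1 l2 : ℝ) (hl0 : 0 < l0) (hl1 : 0 < l1) (hl2 : 0 < l2)
    (n p : ℕ) (X : Matrix (Fin n) (Fin p) ℝ) (y : Fin n → ℝ)
    (Φ : ℝ → ℝ)
    (hΦ : ∀ t : ℝ, Φ t =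
      if 2 * Real.sqrt (l0 * l2) + l1 < |t| then l0 - (|t| - l1) ^ 2 / (4 * l2)
      else 0)
    (P : (Fin p → ℝ) → ℝ)
    (hP : ∀ β : Fin p → ℝ, P β =
      (1 / 2) * (∑ i, (y i - ∑ j, X i j * β j) ^ 2)
        + l1 * (∑ j, |β j|) + l2 * (∑ j, (β j) ^ 2)
        + l0 * ((Finset.univ.filter fun j => β j ≠ 0).card : ℝ))
    (D : (Fin n → ℝ) → ℝ)
    (hD : ∀ α : Fin n → ℝ, D α =
      -(1 / 2) * (∑ i, (α i) ^ 2) - (∑ i, y i * α i)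
        + ∑ j, Φ (∑ i, X i j * α i))
    (αbar : Fin n → ℝ)
    (hmax : ∀ α : Fin n → ℝ, D α ≤ D αbar) :
    ∀ (α : Fin n → ℝ) (β : Fin p → ℝ),
      (∑ i, (α i - αbar i) ^ 2) ≤ 2 * (P β - D α) := by
  intro α β
  -- rewrite P with per-coordinate penalty
  have hPsum : ∀ β' : Fin p → ℝ, P β' =
      (1 / 2) * (∑ i, (y i - ∑ j, X i j * β' j) ^ 2)
        + ∑ j, (l1 * |β' j| + l2 * (β' j) ^ 2 + l0 * (if β' j = 0 then 0 else 1)) := by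
    intro β'
    have hcard : ((Finset.univ.filter fun j => β' j ≠ 0).card : ℝ)
        = ∑ j, (if β' j = 0 then (0:ℝ) else 1) := by
      rw [Finset.card_filter]
      push_cast
      exact Finset.sum_congr rfl fun j _ => by by_cases h : β' j = 0 <;> simp [h]
    have hsplit : ∑ j, (l1 * |β' j| + l2 * (β' j) ^ 2 + l0 * (if β' j = 0 then (0:ℝ) else 1))
        = l1 * (∑ j, |β' j|) + l2 * (∑ j, (β' j) ^ 2)
          + l0 * (∑ j, (if β' j = 0 then (0:ℝ) else 1)) := by
      rw [Finset.sum_add_distrib, Finset.sum_add_distrib, Finset.mul_sum, Finset.mul_sum,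
        Finset.mul_sum]
    rw [hP β', hcard, hsplit]; ring
  -- weak duality
  have hwd : ∀ α' : Fin n → ℝ, D α' ≤ P β := by
    intro α'
    rw [hD α', hPsum β]
    have key : ∀ j ∈ Finset.univ, Φ (∑ i, X i j * α' i)
        ≤ (∑ i, X i j * α' i) * β j
          + (l1 * |β j| + l2 * (β j) ^ 2 + l0 * (if β j = 0 then 0 else 1)) := by
      intro j _
      rw [hΦ]
      exact lemA l0 l1 l2 hl0 hl1 hl2 _ _
    have hΦle := Finset.sum_le_sum key
    rw [Finset.sum_add_distrib] at hΦle
    have hswap : ∑ j, (∑ i, X i j * α' i) * β j = ∑ i, α' i * (∑ j, X i j * β j) := by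
      calc ∑ j, (∑ i, X i j * α' i) * β j = ∑ j, ∑ i, X i j * α' i * β j := by
            exact Finset.sum_congr rfl fun j _ => Finset.sum_mul _ _ _
        _ = ∑ i, ∑ j, X i j * α' i * β j := Finset.sum_comm
        _ = ∑ i, α' i * (∑ j, X i j * β j) := by
            refine Finset.sum_congr rfl fun i _ => ?_
            rw [Finset.mul_sum]
            exact Finset.sum_congr rfl fun j _ => by ring
    have hiden : (1/2) * (∑ i, (y i - ∑ j, X i j * β j) ^ 2) + (1/2) * (∑ i, (α' i) ^ 2)
        + (∑ i, y i * α' i) - (∑ i, α' i * (∑ j, X i j * β j))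
        = ∑ i, (1/2) * (y i - (∑ j, X i j * β j) + α' i) ^ 2 := by
      rw [Finset.mul_sum, Finset.mul_sum, ← Finset.sum_add_distrib, ← Finset.sum_add_distrib,
        ← Finset.sum_sub_distrib]
      exact Finset.sum_congr rfl fun i _ => by ring
    have hnn : 0 ≤ ∑ i, (1/2) * (y i - (∑ j, X i j * β j) + α' i) ^ 2 :=
      Finset.sum_nonneg fun i _ => by positivity
    rw [← hiden] at hnn
    rw [hswap] at hΦle
    linarith
  -- strong concavity step
  set S := ∑ i, (α i - αbar i) ^ 2 with hSdef
  have hS0 : 0 ≤ S := Finset.sum_nonneg fun i _ => sq_nonneg _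
  have hstep : ∀ lam : ℝ, 0 < lam → lam ≤ 1 → (1 - lam) * S ≤ 2 * (D αbar - D α) := by
    intro lam hlam hlam1
    set m : Fin n → ℝ := fun i => lam * α i + (1 - lam) * αbar i with hm
    have hq : ∑ i, (m i) ^ 2
        = lam * (∑ i, (α i) ^ 2) + (1 - lam) * (∑ i, (αbar i) ^ 2) - lam * (1 - lam) * S := by
      rw [hSdef, Finset.mul_sum, Finset.mul_sum, Finset.mul_sum, ← Finset.sum_add_distrib,
        ← Finset.sum_sub_distrib]
      exact Finset.sum_congr rfl fun i _ => by simp only [hm]; ring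
    have hlin : ∑ i, y i * m i = lam * (∑ i, y i * α i) + (1 - lam) * (∑ i, y i * αbar i) := by
      rw [Finset.mul_sum, Finset.mul_sum, ← Finset.sum_add_distrib]
      exact Finset.sum_congr rfl fun i _ => by simp only [hm]; ring
    have hτ : ∀ j, ∑ i, X i j * m i
        = lam * (∑ i, X i j * α i) + (1 - lam) * (∑ i, X i j * αbar i) := by
      intro j
      rw [Finset.mul_sum, Finset.mul_sum, ← Finset.sum_add_distrib]
      exact Finset.sum_congr rfl fun i _ => by simp only [hm]; ring
    have hΦconc : ∀ j ∈ Finset.univ,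
        lam * Φ (∑ i, X i j * α i) + (1 - lam) * Φ (∑ i, X i j * αbar i)
          ≤ Φ (∑ i, X i j * m i) := by
      intro j _
      obtain ⟨b, hb⟩ := lemB l0 l1 l2 hl0 hl1 hl2 (∑ i, X i j * m i)
      rw [← hΦ] at hb
      have e : Φ (∑ i, X i j * m i)
          = lam * ((∑ i, X i j * α i) * b
              + (l1 * |b| + l2 * b ^ 2 + l0 * (if b = 0 then 0 else 1)))
            + (1 - lam) * ((∑ i, X i j * αbar i) * b
              + (l1 * |b| + l2 * b ^ 2 + l0 * (if b = 0 then 0 else 1))) := by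
        rw [hb, hτ j]; ring
      have A1 : Φ (∑ i, X i j * α i) ≤ (∑ i, X i j * α i) * b
          + (l1 * |b| + l2 * b ^ 2 + l0 * (if b = 0 then 0 else 1)) := by
        rw [hΦ]; exact lemA l0 l1 l2 hl0 hl1 hl2 _ _
      have A2 : Φ (∑ i, X i j * αbar i) ≤ (∑ i, X i j * αbar i) * b
          + (l1 * |b| + l2 * b ^ 2 + l0 * (if b = 0 then 0 else 1)) := by
        rw [hΦ]; exact lemA l0 l1 l2 hl0 hl1 hl2 _ _
      have B1 := mul_le_mul_of_nonneg_left A1 hlam.le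
      have B2 := mul_le_mul_of_nonneg_left A2 (by linarith : (0:ℝ) ≤ 1 - lam)
      linarith [e, B1, B2]
    have hΦsum := Finset.sum_le_sum hΦconc
    rw [Finset.sum_add_distrib, ← Finset.mul_sum, ← Finset.mul_sum] at hΦsum
    have hDm : lam * D α + (1 - lam) * D αbar + (1/2) * lam * (1 - lam) * S ≤ D m := by
      rw [hD m, hD α, hD αbar, hq, hlin]
      linarith [hΦsum]
    have hub := hmax m
    have hlamS : lam * ((1 - lam) * S) ≤ lam * (2 * (D αbar - D α)) := by
      nlinarith [hDm, hub]
    exact le_of_mul_le_mul_left hlamS hlam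
  -- take lam → 0
  have hlim : S ≤ 2 * (D αbar - D α) := by
    refine le_of_forall_pos_le_add ?_
    intro ε hε
    have hS1 : (0:ℝ) < S + 1 := by linarith
    set lam := min 1 (ε / (S + 1)) with hlamdef
    have hlampos : 0 < lam := lt_min one_pos (div_pos hε hS1)
    have hlamle : lam ≤ 1 := min_le_left _ _
    have h1 := hstep lam hlampos hlamle
    have h2 : lam * S ≤ ε := by
      have : lam ≤ ε / (S + 1) := min_le_right _ _
      have h3 : lam * S ≤ ε / (S + 1) * S := mul_le_mul_of_nonneg_right this hS0
      have h4 : ε / (S + 1) * S ≤ ε := by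
        rw [div_mul_eq_mul_div, div_le_iff₀ hS1]
        nlinarith
      linarith
    linarith
  linarith [hwd αbar]
end

section
/- (Safe screening rule, inactive features.) Suppose β̄ ∈ ℝᵖ minimizes P over ℝᵖ, ᾱ = Xβ̄ − y, and the link condition holds: for every j, either β̄_j = 0 and |η_j(ᾱ)| ≤ η₀, or β̄_j = sign(η_j(ᾱ))·(|η_j(ᾱ)| − λ₁/(2λ₂)) and |η_j(ᾱ)| ≥ η₀. Then for every α ∈ ℝⁿ and β ∈ ℝᵖ with r = √(2·(P(β) − D(α))), if a coordinate j satisfies |x₍·j₎ᵀα| + ‖x₍·j₎‖·r < 2√(λ₀λ₂) + λ₁, then β̄_j = 0. -/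
open scoped Classical

/-- Per-coordinate Fenchel–Young type inequality for the screening function Φ. -/
lemma fenchel_aux (l0 l1 l2 : ℝ) (hl0 : 0 < l0) (hl1 : 0 < l1) (hl2 : 0 < l2)
    (Φ : ℝ → ℝ)
    (hΦ : ∀ t : ℝ, Φ t =
      if 2 * Real.sqrt (l0 * l2) + l1 < |t| then l0 - (|t| - l1) ^ 2 / (4 * l2)
      else 0)
    (t b : ℝ) :
    Φ t ≤ b * t + l1 * |b| + l2 * b ^ 2 + l0 * (if b ≠ 0 then 1 else 0) := by
  have hsnn : 0 ≤ Real.sqrt (l0 * l2) := Real.sqrt_nonneg _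
  have hsq : Real.sqrt (l0 * l2) ^ 2 = l0 * l2 :=
    Real.sq_sqrt (mul_nonneg hl0.le hl2.le)
  have hbt : -(|b| * |t|) ≤ b * t := by
    rw [← abs_mul]; exact neg_abs_le (b * t)
  rw [hΦ]
  by_cases hb : b = 0
  · subst hb
    simp only [ne_eq, not_true_eq_false, if_false]
    split_ifs with h
    · -- Φ t = l0 - (|t|-l1)^2/(4 l2) ≤ 0
      have h2 : 2 * Real.sqrt (l0 * l2) ≤ |t| - l1 := by linarith
      have hml : l0 * (4 * l2) ≤ (|t| - l1) ^ 2 := by nlinarith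
      have h4 : (0:ℝ) < 4 * l2 := by linarith
      have h5 : l0 ≤ (|t| - l1) ^ 2 / (4 * l2) := (le_div_iff₀ h4).mpr hml
      simp only [abs_zero, mul_zero, zero_mul, add_zero, zero_add,
        not_true_eq_false, if_false]
      linarith
    · simp
  · simp only [hb, ne_eq, not_false_eq_true, if_true, mul_one]
    have hsplit : Real.sqrt (l0 * l2) = Real.sqrt l0 * Real.sqrt l2 :=
      Real.sqrt_mul hl0.le l2
    split_ifs with h
    · -- case |t| > threshold
      have h4 : (0:ℝ) < 4 * l2 := by linarith
      have hkey : |b| * (|t| - l1) - l2 * b ^ 2 ≤ (|t| - l1) ^ 2 / (4 * l2) := by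
        rw [le_div_iff₀ h4]
        rcases abs_cases b with ⟨hB, _⟩ | ⟨hB, _⟩ <;> rw [hB] <;>
          nlinarith [sq_nonneg (2 * l2 * b - (|t| - l1)),
            sq_nonneg (2 * l2 * b + (|t| - l1))]
      nlinarith [hkey, hbt]
    · -- case |t| ≤ threshold, Φ t = 0
      push_neg at h
      have hprod : 0 ≤ |b| * (2 * Real.sqrt (l0 * l2) + l1 - |t|) :=
        mul_nonneg (abs_nonneg b) (by linarith)
      have hs0 : Real.sqrt l0 ^ 2 = l0 := Real.sq_sqrt hl0.le
      have hs2 : Real.sqrt l2 ^ 2 = l2 := Real.sq_sqrt hl2.le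
      have hA : (Real.sqrt l2 * |b| - Real.sqrt l0) ^ 2
          = l2 * b ^ 2 - 2 * Real.sqrt (l0 * l2) * |b| + l0 := by
        have h1 : (Real.sqrt l2 * |b| - Real.sqrt l0) ^ 2
            = Real.sqrt l2 ^ 2 * |b| ^ 2 - 2 * (Real.sqrt l0 * Real.sqrt l2) * |b|
              + Real.sqrt l0 ^ 2 := by ring
        rw [h1, hs0, hs2, sq_abs, ← hsplit]
      linarith [sq_nonneg (Real.sqrt l2 * |b| - Real.sqrt l0), hA, hbt, hprod]

/-- (Safe screening rule, inactive features.) If β̄ minimizes P,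
ᾱ = Xβ̄ − y and the link condition holds, then for all α, β with
r = √(2(P(β) − D(α))), if |x₍·j₎ᵀα| + ‖x₍·j₎‖·r < 2√(λ₀λ₂) + λ₁ then β̄_j = 0. -/
theorem statement_13 (l0 l1 l2 : ℝ) (hl0 : 0 < l0) (hl1 : 0 < l1) (hl2 : 0 < l2)
    (n p : ℕ) (X : Matrix (Fin n) (Fin p) ℝ) (y : Fin n → ℝ)
    (Φ : ℝ → ℝ)
    (hΦ : ∀ t : ℝ, Φ t =
      if 2 * Real.sqrt (l0 * l2) + l1 < |t| then l0 - (|t| - l1) ^ 2 / (4 * l2)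
      else 0)
    (P : (Fin p → ℝ) → ℝ)
    (hP : ∀ β : Fin p → ℝ, P β =
      (1 / 2) * (∑ i, (y i - ∑ j, X i j * β j) ^ 2)
        + l1 * (∑ j, |β j|) + l2 * (∑ j, (β j) ^ 2)
        + l0 * ((Finset.univ.filter fun j => β j ≠ 0).card : ℝ))
    (D : (Fin n → ℝ) → ℝ)
    (hD : ∀ α : Fin n → ℝ, D α =
      -(1 / 2) * (∑ i, (α i) ^ 2) - (∑ i, y i * α i)
        + ∑ j, Φ (∑ i, X i j * α i))
    (η : (Fin n → ℝ) → Fin p → ℝ)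
    (hη : ∀ (α : Fin n → ℝ) (j : Fin p), η α j = -(∑ i, X i j * α i) / (2 * l2))
    (βbar : Fin p → ℝ) (αbar : Fin n → ℝ)
    (hmin : ∀ β : Fin p → ℝ, P βbar ≤ P β)
    (hαbar : ∀ i, αbar i = (∑ j, X i j * βbar j) - y i)
    (hlink : ∀ j,
      (βbar j = 0 ∧ |η αbar j| ≤ (2 * Real.sqrt (l0 * l2) + l1) / (2 * l2)) ∨
      (βbar j = Real.sign (η αbar j) * (|η αbar j| - l1 / (2 * l2)) ∧
        (2 * Real.sqrt (l0 * l2) + l1) / (2 * l2) ≤ |η αbar j|)) :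
    ∀ (α : Fin n → ℝ) (β : Fin p → ℝ) (r : ℝ),
      r = Real.sqrt (2 * (P β - D α)) →
      ∀ j : Fin p,
        |∑ i, X i j * α i| + Real.sqrt (∑ i, (X i j) ^ 2) * r <
          2 * Real.sqrt (l0 * l2) + l1 →
        βbar j = 0 := by
  intro α β r hr j hjlt
  -- duality gap bound: ∑ (αbar - α)^2 ≤ 2 (P β - D α)
  have hgap : ∑ i, (αbar i - α i) ^ 2 ≤ 2 * (P β - D α) := by
    have key : ∀ k : Fin p, Φ (∑ i, X i k * α i) ≤
        βbar k * (∑ i, X i k * α i) + l1 * |βbar k| + l2 * (βbar k) ^ 2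
          + l0 * (if βbar k ≠ 0 then 1 else 0) :=
      fun k => fenchel_aux l0 l1 l2 hl0 hl1 hl2 Φ hΦ _ _
    have hsum : ∑ k, Φ (∑ i, X i k * α i) ≤
        ∑ k, (βbar k * (∑ i, X i k * α i) + l1 * |βbar k| + l2 * (βbar k) ^ 2
          + l0 * (if βbar k ≠ 0 then 1 else 0)) :=
      Finset.sum_le_sum (fun k _ => key k)
    -- expand RHS sum
    have hsum' : ∑ k, (βbar k * (∑ i, X i k * α i) + l1 * |βbar k| + l2 * (βbar k) ^ 2
          + l0 * (if βbar k ≠ 0 then 1 else 0))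
        = (∑ k, βbar k * (∑ i, X i k * α i)) + l1 * (∑ k, |βbar k|)
          + l2 * (∑ k, (βbar k) ^ 2)
          + l0 * ((Finset.univ.filter fun k => βbar k ≠ 0).card : ℝ) := by
      rw [Finset.sum_add_distrib, Finset.sum_add_distrib, Finset.sum_add_distrib,
        ← Finset.mul_sum, ← Finset.mul_sum, ← Finset.mul_sum, Finset.sum_boole]
    -- primal value at βbar
    have e2 : ∑ i, (y i - ∑ j, X i j * βbar j) ^ 2 = ∑ i, (αbar i) ^ 2 :=
      Finset.sum_congr rfl (fun i _ => by rw [hαbar i]; ring)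
    have hPbar : P βbar = (1/2) * (∑ i, (αbar i) ^ 2) + l1 * (∑ k, |βbar k|)
        + l2 * (∑ k, (βbar k) ^ 2)
        + l0 * ((Finset.univ.filter fun k => βbar k ≠ 0).card : ℝ) := by
      rw [hP βbar, e2]
    -- identity: Y + C = T
    have e1 : (∑ i, y i * α i) + (∑ i, α i * αbar i)
        = ∑ k, βbar k * (∑ i, X i k * α i) := by
      calc (∑ i, y i * α i) + (∑ i, α i * αbar i)
          = ∑ i, (y i + αbar i) * α i := by
            rw [← Finset.sum_add_distrib]
            exact Finset.sum_congr rfl (fun i _ => by ring)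
        _ = ∑ i, (∑ j, X i j * βbar j) * α i :=
            Finset.sum_congr rfl (fun i _ => by rw [hαbar i]; ring)
        _ = ∑ i, ∑ k, X i k * βbar k * α i := by
            exact Finset.sum_congr rfl (fun i _ => Finset.sum_mul _ _ _)
        _ = ∑ k, ∑ i, X i k * βbar k * α i := Finset.sum_comm
        _ = ∑ k, βbar k * (∑ i, X i k * α i) := by
            refine Finset.sum_congr rfl (fun k _ => ?_)
            rw [Finset.mul_sum]
            exact Finset.sum_congr rfl (fun i _ => by ring)
    -- expand squared distance
    have id1 : ∑ i, (αbar i - α i) ^ 2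
        = (∑ i, (αbar i) ^ 2) - 2 * (∑ i, α i * αbar i) + (∑ i, (α i) ^ 2) := by
      calc ∑ i, (αbar i - α i) ^ 2
          = ∑ i, ((αbar i) ^ 2 - 2 * (α i * αbar i) + (α i) ^ 2) :=
            Finset.sum_congr rfl (fun i _ => by ring)
        _ = _ := by
            rw [Finset.sum_add_distrib, Finset.sum_sub_distrib, ← Finset.mul_sum]
    have hPb := hmin β
    have hDα := hD α
    linarith [hsum, hsum' ▸ hsum]
  -- from the gap bound: ‖αbar - α‖ ≤ r
  have hgap0 : 0 ≤ 2 * (P β - D α) :=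
    le_trans (Finset.sum_nonneg (fun i _ => sq_nonneg _)) hgap
  have hrle : Real.sqrt (∑ i, (αbar i - α i) ^ 2) ≤ r := by
    rw [hr]; exact Real.sqrt_le_sqrt hgap
  -- Cauchy–Schwarz
  have hCS : |∑ i, X i j * (αbar i - α i)|
      ≤ Real.sqrt (∑ i, (X i j) ^ 2) * Real.sqrt (∑ i, (αbar i - α i) ^ 2) := by
    rw [abs_le]
    constructor
    · have := Real.sum_mul_le_sqrt_mul_sqrt Finset.univ
        (fun i => X i j) (fun i => -(αbar i - α i))
      simp only [mul_neg, Finset.sum_neg_distrib, neg_sq] at this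
      linarith [this]
    · exact Real.sum_mul_le_sqrt_mul_sqrt Finset.univ
        (fun i => X i j) (fun i => αbar i - α i)
  have hXnn : 0 ≤ Real.sqrt (∑ i, (X i j) ^ 2) := Real.sqrt_nonneg _
  have hCS' : |∑ i, X i j * (αbar i - α i)| ≤ Real.sqrt (∑ i, (X i j) ^ 2) * r :=
    le_trans hCS (mul_le_mul_of_nonneg_left hrle hXnn)
  have hsplitsum : ∑ i, X i j * αbar i
      = (∑ i, X i j * α i) + ∑ i, X i j * (αbar i - α i) := by
    rw [← Finset.sum_add_distrib]
    exact Finset.sum_congr rfl (fun i _ => by ring)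
  have habs : |∑ i, X i j * αbar i| < 2 * Real.sqrt (l0 * l2) + l1 := by
    calc |∑ i, X i j * αbar i|
        ≤ |∑ i, X i j * α i| + |∑ i, X i j * (αbar i - α i)| := by
          rw [hsplitsum]; exact abs_add_le _ _
      _ ≤ |∑ i, X i j * α i| + Real.sqrt (∑ i, (X i j) ^ 2) * r := by linarith
      _ < 2 * Real.sqrt (l0 * l2) + l1 := hjlt
  rcases hlink j with ⟨h0, _⟩ | ⟨_, h1⟩
  · exact h0
  · exfalso
    rw [hη] at h1
    have h2l2 : (0:ℝ) < 2 * l2 := by linarith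
    have habs' : |(-(∑ i, X i j * αbar i)) / (2 * l2)|
        = |∑ i, X i j * αbar i| / (2 * l2) := by
      rw [abs_div, abs_neg, abs_of_pos h2l2]
    rw [habs'] at h1
    have := (div_le_div_iff_of_pos_right h2l2).mp h1
    linarith
end

section
/- (Support stability of the thresholded primal map.) Let ᾱ ∈ ℝⁿ satisfy |η_j(ᾱ)| ≠ η₀ and x₍·j₎ ≠ 0 for every j ∈ {1,…,p}, and set β̄_j = 𝔅(η_j(ᾱ)). Define δ̄ = 2λ₂ · min over j of d_j, where d_j = (|η_j(ᾱ)| − η₀)/‖x₍·j₎‖ if β̄_j ≠ 0 and d_j = (η₀ − |η_j(ᾱ)|)/‖x₍·j₎‖ if β̄_j = 0. Then δ̄ > 0, and for every α ∈ ℝⁿ with ‖α − ᾱ‖ < δ̄ and every j, 𝔅(η_j(α)) ≠ 0 if and only if β̄_j ≠ 0. -/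
open scoped Classical

/-- (Support stability of the thresholded primal map.) If every
|η_j(ᾱ)| ≠ η₀ and x₍·j₎ ≠ 0, β̄_j = 𝔅(η_j(ᾱ)), and δ̄ = 2λ₂·min_j d_j where
d_j = (|η_j(ᾱ)| − η₀)/‖x₍·j₎‖ if β̄_j ≠ 0 and d_j = (η₀ − |η_j(ᾱ)|)/‖x₍·j₎‖
otherwise, then δ̄ > 0 and for every α with ‖α − ᾱ‖ < δ̄ and every j,
𝔅(η_j(α)) ≠ 0 ↔ β̄_j ≠ 0. -/
theorem statement_15 (l0 l1 l2 : ℝ) (hl0 : 0 < l0) (hl1 : 0 < l1) (hl2 : 0 < l2)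
    (n p : ℕ) (hp : 0 < p) (X : Matrix (Fin n) (Fin p) ℝ)
    (hX : ∀ j : Fin p, ∃ i, X i j ≠ 0)
    (B : ℝ → ℝ)
    (hB : ∀ η : ℝ, B η =
      if (2 * Real.sqrt (l0 * l2) + l1) / (2 * l2) < |η| then
        Real.sign η * (|η| - l1 / (2 * l2))
      else 0)
    (η : (Fin n → ℝ) → Fin p → ℝ)
    (hη : ∀ (α : Fin n → ℝ) (j : Fin p), η α j = -(∑ i, X i j * α i) / (2 * l2))
    (αbar : Fin n → ℝ)
    (hne : ∀ j, |η αbar j| ≠ (2 * Real.sqrt (l0 * l2) + l1) / (2 * l2))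
    (βbar : Fin p → ℝ)
    (hβbar : ∀ j, βbar j = B (η αbar j))
    (d : Fin p → ℝ)
    (hd : ∀ j, d j =
      if βbar j ≠ 0 then
        (|η αbar j| - (2 * Real.sqrt (l0 * l2) + l1) / (2 * l2)) /
          Real.sqrt (∑ i, (X i j) ^ 2)
      else
        ((2 * Real.sqrt (l0 * l2) + l1) / (2 * l2) - |η αbar j|) /
          Real.sqrt (∑ i, (X i j) ^ 2))
    (δ : ℝ)
    (hδ : δ = 2 * l2 *
      Finset.univ.inf' (Finset.univ_nonempty_iff.mpr (Fin.pos_iff_nonempty.mp hp)) d) :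
    0 < δ ∧
      ∀ α : Fin n → ℝ, Real.sqrt (∑ i, (α i - αbar i) ^ 2) < δ →
        ∀ j : Fin p, B (η α j) ≠ 0 ↔ βbar j ≠ 0 := by
  have hl2' : (0:ℝ) < 2 * l2 := by linarith
  set e0 := (2 * Real.sqrt (l0 * l2) + l1) / (2 * l2) with he0
  have hs : 0 < Real.sqrt (l0 * l2) := Real.sqrt_pos.mpr (by positivity)
  have he0l1 : l1 / (2 * l2) < e0 := by
    rw [he0, div_lt_div_iff₀ hl2' hl2']
    nlinarith
  have he0pos : 0 < e0 := lt_trans (by positivity) he0l1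
  have hBiff : ∀ x : ℝ, B x ≠ 0 ↔ e0 < |x| := by
    intro x
    rw [hB x]
    split_ifs with h
    · simp only [h, iff_true]
      have hx0 : x ≠ 0 := by
        intro h0
        rw [h0, abs_zero] at h
        exact absurd h (not_lt.mpr he0pos.le)
      exact mul_ne_zero (fun hs => hx0 (Real.sign_eq_zero_iff.mp hs)) (by nlinarith [abs_pos.mpr hx0])
    · simpa using h
  have hβiff : ∀ j, βbar j ≠ 0 ↔ e0 < |η αbar j| := fun j => by
    rw [hβbar]; exact hBiff _
  have hβ0 : ∀ j, βbar j = 0 → |η αbar j| < e0 := by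
    intro j h0
    have h1 : ¬ e0 < |η αbar j| := fun hc => (hβiff j).mpr hc h0
    exact lt_of_le_of_ne (not_lt.mp h1) (hne j)
  have hN : ∀ j, 0 < Real.sqrt (∑ i, (X i j) ^ 2) := by
    intro j
    obtain ⟨i, hi⟩ := hX j
    refine Real.sqrt_pos.mpr ?_
    have h1 : 0 < (X i j) ^ 2 := by positivity
    exact h1.trans_le (Finset.single_le_sum (fun i _ => sq_nonneg (X i j)) (Finset.mem_univ i))
  have hd_pos : ∀ j, 0 < d j := by
    intro j
    rw [hd j]
    split_ifs with h
    · exact div_pos (by have := (hβiff j).mp h; linarith) (hN j)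
    · exact div_pos (by have := hβ0 j (not_not.mp h); linarith) (hN j)
  have hinf : 0 < Finset.univ.inf'
      (Finset.univ_nonempty_iff.mpr (Fin.pos_iff_nonempty.mp hp)) d :=
    (Finset.lt_inf'_iff _).mpr fun j _ => hd_pos j
  refine ⟨by rw [hδ]; exact mul_pos hl2' hinf, ?_⟩
  intro α hα j
  have hNd : ∀ x : ℝ, Real.sqrt (∑ i, (X i j) ^ 2) * (x / Real.sqrt (∑ i, (X i j) ^ 2)) = x := by
    intro x; rw [mul_comm, div_mul_cancel₀ _ (hN j).ne']
  have hdiff : |η α j - η αbar j| < Real.sqrt (∑ i, (X i j) ^ 2) * d j := by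
    have hkey : η α j - η αbar j = -(∑ i, X i j * (α i - αbar i)) / (2 * l2) := by
      have hsum : ∑ i, X i j * (α i - αbar i)
          = (∑ i, X i j * α i) - ∑ i, X i j * αbar i := by
        rw [← Finset.sum_sub_distrib]
        exact Finset.sum_congr rfl fun i _ => mul_sub _ _ _
      rw [hη, hη, hsum]; ring
    have hcs : |∑ i, X i j * (α i - αbar i)|
        ≤ Real.sqrt (∑ i, (X i j) ^ 2) * Real.sqrt (∑ i, (α i - αbar i) ^ 2) := by
      have h1 := Finset.sum_mul_sq_le_sq_mul_sq Finset.univ (fun i => X i j)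
        (fun i => α i - αbar i)
      calc |∑ i, X i j * (α i - αbar i)|
          = Real.sqrt ((∑ i, X i j * (α i - αbar i)) ^ 2) := (Real.sqrt_sq_eq_abs _).symm
        _ ≤ Real.sqrt ((∑ i, (X i j) ^ 2) * (∑ i, (α i - αbar i) ^ 2)) :=
            Real.sqrt_le_sqrt h1
        _ = _ := Real.sqrt_mul (by positivity) _
    rw [hkey, abs_div, abs_neg, abs_of_pos hl2']
    have hle : Finset.univ.inf'
        (Finset.univ_nonempty_iff.mpr (Fin.pos_iff_nonempty.mp hp)) d ≤ d j :=
      Finset.inf'_le _ (Finset.mem_univ j)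
    calc |∑ i, X i j * (α i - αbar i)| / (2 * l2)
        ≤ Real.sqrt (∑ i, (X i j) ^ 2) * Real.sqrt (∑ i, (α i - αbar i) ^ 2) / (2 * l2) := by
          gcongr
      _ < Real.sqrt (∑ i, (X i j) ^ 2) * δ / (2 * l2) := by
          gcongr
          exact hN j
      _ ≤ Real.sqrt (∑ i, (X i j) ^ 2) * d j := by
          rw [hδ]
          rw [show Real.sqrt (∑ i, (X i j) ^ 2) * (2 * l2 * Finset.univ.inf'
            (Finset.univ_nonempty_iff.mpr (Fin.pos_iff_nonempty.mp hp)) d) / (2 * l2)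
            = Real.sqrt (∑ i, (X i j) ^ 2) * Finset.univ.inf'
              (Finset.univ_nonempty_iff.mpr (Fin.pos_iff_nonempty.mp hp)) d by
            rw [div_eq_iff hl2'.ne']; ring]
          gcongr
  have habs1 := abs_sub_abs_le_abs_sub (η α j) (η αbar j)
  have habs2 := abs_sub_abs_le_abs_sub (η αbar j) (η α j)
  rw [abs_sub_comm] at habs2
  by_cases hb : βbar j = 0
  · have h1 : |η αbar j| < e0 := hβ0 j hb
    rw [hd j, if_neg (not_not.mpr hb), hNd] at hdiff
    have h2 : |η α j| < e0 := by linarith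
    rw [hBiff]
    simp only [hb, ne_eq, not_true_eq_false, iff_false, not_lt]
    exact h2.le
  · have h1 : e0 < |η αbar j| := (hβiff j).mp hb
    rw [hd j, if_pos hb, hNd] at hdiff
    have h2 : e0 < |η α j| := by linarith
    rw [hBiff]
    simp only [hb, ne_eq, not_false_eq_true, iff_true]
    exact h2
end

section
/- (Local Lipschitz estimate for the thresholded primal map.) Let ᾱ ∈ ℝⁿ satisfy |η_j(ᾱ)| ≠ η₀ and x₍·j₎ ≠ 0 for every j ∈ {1,…,p}, set β̄_j = 𝔅(η_j(ᾱ)), let S = {j : β̄_j ≠ 0}, and define δ̄ = 2λ₂ · min over j of d_j, where d_j = (|η_j(ᾱ)| − η₀)/‖x₍·j₎‖ if j ∈ S and d_j = (η₀ − |η_j(ᾱ)|)/‖x₍·j₎‖ if j ∉ S. Then for every α ∈ ℝⁿ with ‖α − ᾱ‖ < δ̄, the vector β(α) defined by β(α)_j = 𝔅(η_j(α)) satisfies ‖β(α) − β̄‖ ≤ (‖X_S‖/(2λ₂))·‖α − ᾱ‖, where X_S is the submatrix of X consisting of the columns indexed by S and ‖X_S‖ is its operator norm (largest singular value). -/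
open scoped Classical
lemma cs_abs {ι : Type*} [Fintype ι] (f g : ι → ℝ) :
    |∑ j, f j * g j| ≤ Real.sqrt (∑ j, f j ^ 2) * Real.sqrt (∑ j, g j ^ 2) := by
  rw [abs_le]
  refine ⟨?_, Real.sum_mul_le_sqrt_mul_sqrt _ _ _⟩
  have h := Real.sum_mul_le_sqrt_mul_sqrt Finset.univ (fun j => -(f j)) g
  simp only [neg_mul, Finset.sum_neg_distrib, neg_sq] at h
  linarith

lemma transpose_bound {n : ℕ} {s : Type*} [Fintype s] (A : Fin n → s → ℝ) (opN : ℝ)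
    (h0 : 0 ≤ opN)
    (h : ∀ v : s → ℝ, Real.sqrt (∑ i, (∑ j, A i j * v j) ^ 2) ≤
      opN * Real.sqrt (∑ j, (v j) ^ 2))
    (u : Fin n → ℝ) :
    Real.sqrt (∑ j, (∑ i, A i j * u i) ^ 2) ≤ opN * Real.sqrt (∑ i, (u i) ^ 2) := by
  set w : s → ℝ := fun j => ∑ i, A i j * u i with hw
  set W := Real.sqrt (∑ j, (w j) ^ 2) with hW
  set N := Real.sqrt (∑ i, (u i) ^ 2) with hN
  have hWnn : 0 ≤ W := Real.sqrt_nonneg _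
  have hNnn : 0 ≤ N := Real.sqrt_nonneg _
  rcases eq_or_lt_of_le hWnn with hW0 | hWpos
  · rw [← hW0]; positivity
  have key : W * W ≤ (opN * N) * W := by
    have hsq : W * W = ∑ j, (w j) ^ 2 := by
      rw [← pow_two, hW, Real.sq_sqrt (by positivity)]
    have swap : ∑ j, (w j) ^ 2 = ∑ i, u i * (∑ j, A i j * w j) := by
      have h1 : ∀ j, (w j) ^ 2 = ∑ i, u i * (A i j * w j) := by
        intro j
        rw [pow_two]
        nth_rewrite 1 [show w j = ∑ i, A i j * u i from rfl]
        rw [Finset.sum_mul]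
        exact Finset.sum_congr rfl fun i _ => by ring
      rw [Finset.sum_congr rfl fun j _ => h1 j, Finset.sum_comm]
      exact Finset.sum_congr rfl fun i _ => (Finset.mul_sum _ _ _).symm
    have cs : ∑ i, u i * (∑ j, A i j * w j) ≤
        N * Real.sqrt (∑ i, (∑ j, A i j * w j) ^ 2) :=
      le_trans (le_abs_self _) (cs_abs _ _)
    calc W * W = ∑ i, u i * (∑ j, A i j * w j) := by rw [hsq, swap]
      _ ≤ N * Real.sqrt (∑ i, (∑ j, A i j * w j) ^ 2) := cs
      _ ≤ N * (opN * W) := mul_le_mul_of_nonneg_left (h w) hNnn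
      _ = (opN * N) * W := by ring
  exact le_of_mul_le_mul_right key hWpos

/-- (Local Lipschitz estimate for the thresholded primal map.)
With β̄_j = 𝔅(η_j(ᾱ)), S = {j : β̄_j ≠ 0}, δ̄ = 2λ₂·min_j d_j, and ‖X_S‖ the
operator norm (largest singular value) of the column submatrix X_S, every α with
‖α − ᾱ‖ < δ̄ satisfies ‖β(α) − β̄‖ ≤ (‖X_S‖/(2λ₂))·‖α − ᾱ‖ where β(α)_j = 𝔅(η_j(α)). -/
theorem statement_16 (l0 l1 l2 : ℝ) (hl0 : 0 < l0) (hl1 : 0 < l1) (hl2 : 0 < l2)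
    (n p : ℕ) (hp : 0 < p) (X : Matrix (Fin n) (Fin p) ℝ)
    (hX : ∀ j : Fin p, ∃ i, X i j ≠ 0)
    (B : ℝ → ℝ)
    (hB : ∀ η : ℝ, B η =
      if (2 * Real.sqrt (l0 * l2) + l1) / (2 * l2) < |η| then
        Real.sign η * (|η| - l1 / (2 * l2))
      else 0)
    (η : (Fin n → ℝ) → Fin p → ℝ)
    (hη : ∀ (α : Fin n → ℝ) (j : Fin p), η α j = -(∑ i, X i j * α i) / (2 * l2))
    (αbar : Fin n → ℝ)
    (hne : ∀ j, |η αbar j| ≠ (2 * Real.sqrt (l0 * l2) + l1) / (2 * l2))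
    (βbar : Fin p → ℝ)
    (hβbar : ∀ j, βbar j = B (η αbar j))
    (d : Fin p → ℝ)
    (hd : ∀ j, d j =
      if βbar j ≠ 0 then
        (|η αbar j| - (2 * Real.sqrt (l0 * l2) + l1) / (2 * l2)) /
          Real.sqrt (∑ i, (X i j) ^ 2)
      else
        ((2 * Real.sqrt (l0 * l2) + l1) / (2 * l2) - |η αbar j|) /
          Real.sqrt (∑ i, (X i j) ^ 2))
    (δ : ℝ)
    (hδ : δ = 2 * l2 *
      Finset.univ.inf' (Finset.univ_nonempty_iff.mpr (Fin.pos_iff_nonempty.mp hp)) d)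
    -- `opN` is the operator norm of the submatrix `X_S`, `S = {j : βbar j ≠ 0}`:
    -- it is the least constant `c ≥ 0` with `‖X_S v‖ ≤ c‖v‖` for all `v`.
    (opN : ℝ)
    (hopN : IsLeast
      {c : ℝ | 0 ≤ c ∧ ∀ v : {j : Fin p // βbar j ≠ 0} → ℝ,
        Real.sqrt (∑ i, (∑ j : {j : Fin p // βbar j ≠ 0}, X i j.1 * v j) ^ 2) ≤
          c * Real.sqrt (∑ j : {j : Fin p // βbar j ≠ 0}, (v j) ^ 2)}
      opN) :
    ∀ α : Fin n → ℝ, Real.sqrt (∑ i, (α i - αbar i) ^ 2) < δ →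
      Real.sqrt (∑ j, (B (η α j) - βbar j) ^ 2) ≤
        opN / (2 * l2) * Real.sqrt (∑ i, (α i - αbar i) ^ 2) := by

  set c : ℝ := (2 * Real.sqrt (l0 * l2) + l1) / (2 * l2) with hcdef
  set k : ℝ := l1 / (2 * l2) with hkdef
  have h2l2 : (0:ℝ) < 2 * l2 := by linarith
  have hsq0 : 0 < Real.sqrt (l0 * l2) := Real.sqrt_pos.2 (by positivity)
  have hkc : k < c := by
    rw [hcdef, hkdef, div_lt_div_iff₀ h2l2 h2l2]
    nlinarith
  have hk0 : 0 < k := by positivity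
  have hc0 : 0 < c := lt_trans hk0 hkc
  -- membership characterization
  have hSiff : ∀ j, βbar j ≠ 0 ↔ c < |η αbar j| := by
    intro j
    rw [hβbar j, hB]
    constructor
    · intro h
      by_contra hcon
      rw [if_neg hcon] at h
      exact h rfl
    · intro h
      rw [if_pos h]
      have hη0 : η αbar j ≠ 0 := by
        intro h0; rw [h0, abs_zero] at h; linarith
      have hs : Real.sign (η αbar j) ≠ 0 := fun h => hη0 (Real.sign_eq_zero_iff.1 h)
      have : |η αbar j| - k ≠ 0 := by
        have := lt_trans hkc h; intro h0; linarith [h0]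
      exact mul_ne_zero hs this
  intro α hα
  set nu : ℝ := Real.sqrt (∑ i, (α i - αbar i) ^ 2) with hnu
  have hnu0 : 0 ≤ nu := Real.sqrt_nonneg _
  -- per-column norm positivity
  have hnorm : ∀ j, 0 < Real.sqrt (∑ i, (X i j) ^ 2) := by
    intro j
    obtain ⟨i, hi⟩ := hX j
    apply Real.sqrt_pos.2
    apply Finset.sum_pos' (fun i _ => sq_nonneg _)
    exact ⟨i, Finset.mem_univ i, by positivity⟩
  -- eta difference
  have hηdiff : ∀ j, η α j - η αbar j = -(∑ i, X i j * (α i - αbar i)) / (2 * l2) := by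
    intro j
    rw [hη α j, hη αbar j, div_sub_div_same]
    rw [show (-∑ i, X i j * α i) - -∑ i, X i j * αbar i
        = -(∑ i, X i j * α i - ∑ i, X i j * αbar i) by ring, ← Finset.sum_sub_distrib]
    congr 2
    exact Finset.sum_congr rfl fun i _ => (mul_sub _ _ _).symm
  -- bound on eta difference
  have ht : ∀ j, |η α j - η αbar j| ≤ Real.sqrt (∑ i, (X i j) ^ 2) * nu / (2 * l2) := by
    intro j
    rw [hηdiff j, abs_div, abs_neg, abs_of_pos h2l2]
    gcongr
    exact cs_abs (fun i => X i j) (fun i => α i - αbar i)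
  -- strict margin bound
  have hmargin : ∀ j, Real.sqrt (∑ i, (X i j) ^ 2) * nu / (2 * l2) <
      Real.sqrt (∑ i, (X i j) ^ 2) * d j := by
    intro j
    have h1 : nu < 2 * l2 * d j := by
      have h2 : Finset.univ.inf' (Finset.univ_nonempty_iff.mpr
          (Fin.pos_iff_nonempty.mp hp)) d ≤ d j := Finset.inf'_le d (Finset.mem_univ j)
      calc nu < δ := hα
        _ ≤ 2 * l2 * d j := by rw [hδ]; exact mul_le_mul_of_nonneg_left h2 (le_of_lt h2l2)
    rw [div_lt_iff₀ h2l2]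
    have := hnorm j
    nlinarith
  -- key pointwise formula
  have hkey : ∀ j, B (η α j) - βbar j =
      if βbar j ≠ 0 then η α j - η αbar j else 0 := by
    intro j
    have habs : |η α j - η αbar j| < Real.sqrt (∑ i, (X i j) ^ 2) * d j :=
      lt_of_le_of_lt (ht j) (hmargin j)
    by_cases hj : βbar j ≠ 0
    · rw [if_pos hj]
      have hcj : c < |η αbar j| := (hSiff j).1 hj
      have hmj : Real.sqrt (∑ i, (X i j) ^ 2) * d j = |η αbar j| - c := by
        rw [hd j, if_pos hj, mul_comm, div_mul_cancel₀ _ (ne_of_gt (hnorm j))]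
      rw [hmj] at habs
      rw [hB (η α j), hβbar j, hB (η αbar j)]
      rcases lt_trichotomy (η αbar j) 0 with hlt | heq | hgt
      · have h1 := abs_lt.1 habs
        rw [abs_of_neg hlt] at h1 hcj
        have hα' : η α j < -c := by linarith [h1.2]
        have hα'' : η α j < 0 := by linarith
        rw [if_pos (by rw [abs_of_neg hα'']; linarith), if_pos (by rw [abs_of_neg hlt]; exact hcj),
          Real.sign_of_neg hα'', Real.sign_of_neg hlt, abs_of_neg hα'', abs_of_neg hlt]
        ring
      · rw [heq, abs_zero] at hcj; linarith
      · have h1 := abs_lt.1 habs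
        rw [abs_of_pos hgt] at h1 hcj
        have hα' : c < η α j := by linarith [h1.1]
        have hα'' : 0 < η α j := by linarith
        rw [if_pos (by rw [abs_of_pos hα'']; exact hα'), if_pos (by rw [abs_of_pos hgt]; exact hcj),
          Real.sign_of_pos hα'', Real.sign_of_pos hgt, abs_of_pos hα'', abs_of_pos hgt]
        ring
    · rw [if_neg hj]
      push_neg at hj
      have hcj : |η αbar j| < c := by
        have := (hSiff j).not.1 (by simp [hj])
        push_neg at this
        exact lt_of_le_of_ne this (hne j)
      have hmj : Real.sqrt (∑ i, (X i j) ^ 2) * d j = c - |η αbar j| := by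
        rw [hd j, if_neg (by simp [hj]), mul_comm, div_mul_cancel₀ _ (ne_of_gt (hnorm j))]
      rw [hmj] at habs
      have hcα : ¬ c < |η α j| := by
        push_neg
        have h1 := abs_sub_abs_le_abs_sub (η α j) (η αbar j)
        linarith [lt_of_le_of_lt h1 habs]
      rw [hB (η α j), if_neg hcα, hj, sub_zero]
  -- rewrite the sum over the support subtype
  have hsum : ∑ j, (B (η α j) - βbar j) ^ 2 =
      ∑ j : {j : Fin p // βbar j ≠ 0}, (∑ i, X i j.1 * (α i - αbar i)) ^ 2 / (2 * l2) ^ 2 := by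
    have h1 : ∀ j, (B (η α j) - βbar j) ^ 2 =
        if βbar j ≠ 0 then (∑ i, X i j * (α i - αbar i)) ^ 2 / (2 * l2) ^ 2 else 0 := by
      intro j
      rw [hkey j]
      by_cases hj : βbar j ≠ 0
      · rw [if_pos hj, if_pos hj, hηdiff j]; ring
      · rw [if_neg hj, if_neg hj]; ring
    rw [Finset.sum_congr rfl fun j _ => h1 j, ← Finset.sum_filter]
    exact Finset.sum_subtype _ (fun x => by simp) _
  rw [hsum]
  have hA := transpose_bound (fun i (j : {j : Fin p // βbar j ≠ 0}) => X i j.1) opN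
    hopN.1.1 hopN.1.2 (fun i => α i - αbar i)
  have h2 : Real.sqrt (∑ j : {j : Fin p // βbar j ≠ 0},
        (∑ i, X i j.1 * (α i - αbar i)) ^ 2 / (2 * l2) ^ 2)
      = Real.sqrt (∑ j : {j : Fin p // βbar j ≠ 0},
        (∑ i, X i j.1 * (α i - αbar i)) ^ 2) / (2 * l2) := by
    rw [← Finset.sum_div, Real.sqrt_div' _ (by positivity), Real.sqrt_sq h2l2.le]
  calc Real.sqrt (∑ j : {j : Fin p // βbar j ≠ 0},
        (∑ i, X i j.1 * (α i - αbar i)) ^ 2 / (2 * l2) ^ 2)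
      = Real.sqrt (∑ j : {j : Fin p // βbar j ≠ 0},
        (∑ i, X i j.1 * (α i - αbar i)) ^ 2) / (2 * l2) := h2
    _ ≤ (opN * nu) / (2 * l2) := by gcongr
    _ = opN / (2 * l2) * nu := by ring
end

section
/- (Supergradient of the square-loss dual.) Let α ∈ ℝⁿ satisfy |η_j(α)| ≠ η₀ for every j ∈ {1,…,p}, and let β(α) ∈ ℝᵖ be defined by β(α)_j = 𝔅(η_j(α)). Then the vector X·β(α) − y − α is a supergradient of D at α: for every α′ ∈ ℝⁿ, D(α′) ≤ D(α) + ⟨X·β(α) − y − α, α′ − α⟩. -/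
set_option maxHeartbeats 1000000
open scoped Classical

lemma key17 (l0 l1 l2 : ℝ) (hl0 : 0 < l0) (hl1 : 0 < l1) (hl2 : 0 < l2)
    (τ τ' b : ℝ)
    (hne : |τ| ≠ 2 * Real.sqrt (l0 * l2) + l1)
    (hb : b = if (2 * Real.sqrt (l0 * l2) + l1) / (2 * l2) < |(-τ / (2 * l2))| then
        Real.sign (-τ / (2 * l2)) * (|(-τ / (2 * l2))| - l1 / (2 * l2)) else 0) :
    (if 2 * Real.sqrt (l0 * l2) + l1 < |τ'| then l0 - (|τ'| - l1) ^ 2 / (4 * l2) else 0)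
      ≤ (if 2 * Real.sqrt (l0 * l2) + l1 < |τ| then l0 - (|τ| - l1) ^ 2 / (4 * l2) else 0)
        + b * (τ' - τ) := by
  set m := Real.sqrt (l0 * l2) with hm
  have hm0 : 0 ≤ m := Real.sqrt_nonneg _
  have hm2 : m ^ 2 = l0 * l2 := Real.sq_sqrt (by positivity)
  have h2l2 : (0:ℝ) < 2 * l2 := by linarith
  have h4l2 : (0:ℝ) < 4 * l2 := by linarith
  have habs : |(-τ / (2 * l2))| = |τ| / (2 * l2) := by
    rw [abs_div, abs_neg, abs_of_pos h2l2]
  by_cases hτ : 2 * m + l1 < |τ|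
  · have hτ0 : τ ≠ 0 := by
      intro h; rw [h, abs_zero] at hτ; nlinarith
    have hcond : (2 * m + l1) / (2 * l2) < |(-τ / (2 * l2))| := by
      rw [habs]; exact (div_lt_div_iff_of_pos_right h2l2).mpr hτ
    rcases hτ0.lt_or_gt with hneg | hpos
    · -- τ < 0
      have hτn : 2 * m + l1 < -τ := by rwa [abs_of_neg hneg] at hτ
      have hb' : b = (-τ - l1) / (2 * l2) := by
        rw [hb, if_pos hcond, Real.sign_of_pos (div_pos (by linarith) h2l2), habs,
          abs_of_neg hneg]
        ring
      rw [if_pos hτ, hb', abs_of_neg hneg]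
      by_cases hτ' : 2 * m + l1 < |τ'|
      · rw [if_pos hτ', ← sub_nonneg]
        have hE : (l0 - (-τ - l1) ^ 2 / (4 * l2) + (-τ - l1) / (2 * l2) * (τ' - τ))
            - (l0 - (|τ'| - l1) ^ 2 / (4 * l2))
            = ((|τ'| - l1) ^ 2 - (-τ - l1) ^ 2 + 2 * (-τ - l1) * (τ' - τ)) / (4 * l2) := by
          field_simp; ring
        rw [hE]
        apply div_nonneg _ h4l2.le
        nlinarith [neg_abs_le τ', sq_nonneg (|τ'| + τ), hτn, hm0]
      · rw [if_neg hτ', ← sub_nonneg]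
        push_neg at hτ'
        have hE : (l0 - (-τ - l1) ^ 2 / (4 * l2) + (-τ - l1) / (2 * l2) * (τ' - τ)) - 0
            = (4 * (l0 * l2) - (-τ - l1) ^ 2 + 2 * (-τ - l1) * (τ' - τ)) / (4 * l2) := by
          field_simp; ring
        rw [hE]
        apply div_nonneg _ h4l2.le
        nlinarith [sq_nonneg (-τ - l1 - 2 * m), neg_abs_le τ', hτn, hm2, hm0, hτ']
    · -- τ > 0
      have hτp : 2 * m + l1 < τ := by rwa [abs_of_pos hpos] at hτ
      have hb' : b = -((τ - l1) / (2 * l2)) := by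
        rw [hb, if_pos hcond, Real.sign_of_neg (by
          apply div_neg_of_neg_of_pos (by linarith) h2l2), habs, abs_of_pos hpos]
        ring
      rw [if_pos hτ, hb', abs_of_pos hpos]
      by_cases hτ' : 2 * m + l1 < |τ'|
      · rw [if_pos hτ', ← sub_nonneg]
        have hE : (l0 - (τ - l1) ^ 2 / (4 * l2) + -((τ - l1) / (2 * l2)) * (τ' - τ))
            - (l0 - (|τ'| - l1) ^ 2 / (4 * l2))
            = ((|τ'| - l1) ^ 2 - (τ - l1) ^ 2 - 2 * (τ - l1) * (τ' - τ)) / (4 * l2) := by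
          field_simp; ring
        rw [hE]
        apply div_nonneg _ h4l2.le
        nlinarith [le_abs_self τ', sq_nonneg (|τ'| - τ), hτp, hm0]
      · rw [if_neg hτ', ← sub_nonneg]
        push_neg at hτ'
        have hE : (l0 - (τ - l1) ^ 2 / (4 * l2) + -((τ - l1) / (2 * l2)) * (τ' - τ)) - 0
            = (4 * (l0 * l2) - (τ - l1) ^ 2 - 2 * (τ - l1) * (τ' - τ)) / (4 * l2) := by
          field_simp; ring
        rw [hE]
        apply div_nonneg _ h4l2.le
        nlinarith [sq_nonneg (τ - l1 - 2 * m), le_abs_self τ', hτp, hm2, hm0, hτ']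
  · have hτle : |τ| < 2 * m + l1 := lt_of_le_of_ne (not_lt.mp hτ) hne
    have hb0 : b = 0 := by
      rw [hb, if_neg]
      rw [habs]
      exact not_lt.mpr ((div_le_div_iff_of_pos_right h2l2).mpr hτle.le)
    rw [if_neg hτ, hb0, zero_mul, add_zero]
    by_cases hτ' : 2 * m + l1 < |τ'|
    · rw [if_pos hτ', sub_nonpos, le_div_iff₀ h4l2]
      nlinarith [hτ', hm2, hm0, abs_nonneg τ']
    · rw [if_neg hτ']
/-- (Supergradient of the square-loss dual.) If |η_j(α)| ≠ η₀ for
every j and β(α)_j = 𝔅(η_j(α)), then X·β(α) − y − α is a supergradient of D at α: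
for every α′, D(α′) ≤ D(α) + ⟨X·β(α) − y − α, α′ − α⟩. -/
theorem statement_17 (l0 l1 l2 : ℝ) (hl0 : 0 < l0) (hl1 : 0 < l1) (hl2 : 0 < l2)
    (n p : ℕ) (X : Matrix (Fin n) (Fin p) ℝ) (y : Fin n → ℝ)
    (Φ : ℝ → ℝ)
    (hΦ : ∀ t : ℝ, Φ t =
      if 2 * Real.sqrt (l0 * l2) + l1 < |t| then l0 - (|t| - l1) ^ 2 / (4 * l2)
      else 0)
    (B : ℝ → ℝ)
    (hB : ∀ η : ℝ, B η =
      if (2 * Real.sqrt (l0 * l2) + l1) / (2 * l2) < |η| then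
        Real.sign η * (|η| - l1 / (2 * l2))
      else 0)
    (D : (Fin n → ℝ) → ℝ)
    (hD : ∀ α : Fin n → ℝ, D α =
      -(1 / 2) * (∑ i, (α i) ^ 2) - (∑ i, y i * α i)
        + ∑ j, Φ (∑ i, X i j * α i))
    (α : Fin n → ℝ)
    (η : Fin p → ℝ)
    (hη : ∀ j, η j = -(∑ i, X i j * α i) / (2 * l2))
    (hne : ∀ j, |η j| ≠ (2 * Real.sqrt (l0 * l2) + l1) / (2 * l2))
    (β : Fin p → ℝ)
    (hβ : ∀ j, β j = B (η j)) :
    ∀ α' : Fin n → ℝ,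
      D α' ≤ D α +
        ∑ i, ((∑ j, X i j * β j) - y i - α i) * (α' i - α i) := by
  intro α'
  have h2l2 : (0:ℝ) < 2 * l2 := by linarith
  set τ : Fin p → ℝ := fun j => ∑ i, X i j * α i with hτ
  set τ' : Fin p → ℝ := fun j => ∑ i, X i j * α' i with hτ'
  have hkey : ∀ j, Φ (τ' j) ≤ Φ (τ j) + β j * (τ' j - τ j) := by
    intro j
    have hne' : |τ j| ≠ 2 * Real.sqrt (l0 * l2) + l1 := by
      intro h
      apply hne j
      rw [hη j, abs_div, abs_neg, abs_of_pos h2l2, h]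
    have hbj : β j = if (2 * Real.sqrt (l0 * l2) + l1) / (2 * l2) < |(-(τ j) / (2 * l2))| then
        Real.sign (-(τ j) / (2 * l2)) * (|(-(τ j) / (2 * l2))| - l1 / (2 * l2)) else 0 := by
      rw [hβ j, hB, hη j]
    rw [hΦ, hΦ]
    exact key17 l0 l1 l2 hl0 hl1 hl2 (τ j) (τ' j) (β j) hne' hbj
  have hA : ∑ j, Φ (τ' j) ≤ ∑ j, Φ (τ j) + ∑ j, β j * (τ' j - τ j) := by
    rw [← Finset.sum_add_distrib]
    exact Finset.sum_le_sum fun j _ => hkey j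
  have hswap : ∑ j, β j * (τ' j - τ j) = ∑ i, (∑ j, X i j * β j) * (α' i - α i) := by
    simp only [hτ, hτ', Finset.sum_mul, Finset.mul_sum, ← Finset.sum_sub_distrib]
    rw [Finset.sum_comm]
    exact Finset.sum_congr rfl fun i _ => Finset.sum_congr rfl fun j _ => by ring
  have hQ : -(1 / 2) * (∑ i, (α' i) ^ 2) - (∑ i, y i * α' i)
      ≤ -(1 / 2) * (∑ i, (α i) ^ 2) - (∑ i, y i * α i)
        + ∑ i, (-(α i) - y i) * (α' i - α i) := by
    have h1 : ∀ i ∈ Finset.univ, -(1/2) * (α' i) ^ 2 - y i * α' i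
        ≤ -(1/2) * (α i) ^ 2 - y i * α i + (-(α i) - y i) * (α' i - α i) := by
      intro i _
      nlinarith [sq_nonneg (α' i - α i)]
    have := Finset.sum_le_sum h1
    simp only [Finset.sum_add_distrib, Finset.sum_sub_distrib, ← Finset.mul_sum] at this
    linarith
  have hsplit : ∑ i, ((∑ j, X i j * β j) - y i - α i) * (α' i - α i)
      = ∑ i, (∑ j, X i j * β j) * (α' i - α i) + ∑ i, (-(α i) - y i) * (α' i - α i) := by
    rw [← Finset.sum_add_distrib]
    exact Finset.sum_congr rfl fun i _ => by ring
  rw [hD, hD, hsplit]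
  have hA' := hA
  rw [hswap] at hA'
  linarith
end

section
/- (Convergence-rate recursion.) Let C ≥ 0 and let h : ℕ → ℝ satisfy h(t) ≥ 0 for all t, h(1)² ≤ C, and h(t)² ≤ (1 − 1/t)·h(t−1)² + C/t² for every integer t ≥ 2. Then for every integer t ≥ 1, h(t)² ≤ C·(1 + ln t)/t. -/
lemma log_gap (N : ℝ) (hN : 1 ≤ N) : 1 / (N + 1) ≤ Real.log (N + 1) - Real.log N := by
  have hNpos : 0 < N := by linarith
  have hN1 : 0 < N + 1 := by linarith
  have h1 : Real.log (N / (N + 1)) ≤ N / (N + 1) - 1 :=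
    Real.log_le_sub_one_of_pos (by positivity)
  rw [Real.log_div (ne_of_gt hNpos) (ne_of_gt hN1)] at h1
  have h2 : N / (N + 1) - 1 = -(1 / (N + 1)) := by field_simp; ring
  linarith [h1, h2 ▸ h1]

/-- (Convergence-rate recursion.) If C ≥ 0, h : ℕ → ℝ is
nonnegative, h(1)² ≤ C, and h(t)² ≤ (1 − 1/t)·h(t−1)² + C/t² for every integer
t ≥ 2, then for every integer t ≥ 1, h(t)² ≤ C·(1 + ln t)/t. -/
theorem statement_19 (C : ℝ) (hC : 0 ≤ C) (h : ℕ → ℝ)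
    (hnonneg : ∀ t : ℕ, 0 ≤ h t)
    (hinit : (h 1) ^ 2 ≤ C)
    (hrec : ∀ t : ℕ, 2 ≤ t →
      (h t) ^ 2 ≤ (1 - 1 / (t : ℝ)) * (h (t - 1)) ^ 2 + C / (t : ℝ) ^ 2) :
    ∀ t : ℕ, 1 ≤ t → (h t) ^ 2 ≤ C * (1 + Real.log t) / t := by
  intro t ht
  induction t, ht using Nat.le_induction with
  | base => simpa using hinit
  | succ n hn ih =>
    have hrecn := hrec (n + 1) (by omega)
    simp only [Nat.add_sub_cancel] at hrecn
    set N : ℝ := (n : ℝ) with hNdef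
    have hN : 1 ≤ N := by rw [hNdef]; exact_mod_cast hn
    have hNpos : 0 < N := by linarith
    have hN1 : (0 : ℝ) < N + 1 := by linarith
    have hcast : ((n + 1 : ℕ) : ℝ) = N + 1 := by push_cast; ring
    rw [hcast] at hrecn ⊢
    have hfac : (0 : ℝ) ≤ 1 - 1 / (N + 1) := by
      rw [sub_nonneg, div_le_one hN1]; linarith
    have step1 : (1 - 1 / (N + 1)) * (h n) ^ 2 ≤
        (1 - 1 / (N + 1)) * (C * (1 + Real.log N) / N) :=
      mul_le_mul_of_nonneg_left ih hfac
    have e1 : (1 - 1 / (N + 1)) * (C * (1 + Real.log N) / N) =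
        C * (1 + Real.log N) / (N + 1) := by
      field_simp; ring
    have key := log_gap N hN
    have step2 : C / (N + 1) ^ 2 ≤ C * (Real.log (N + 1) - Real.log N) / (N + 1) := by
      have e : C / (N + 1) ^ 2 = C * (1 / (N + 1)) / (N + 1) := by rw [mul_one_div, div_div, ← sq]
      rw [e]
      gcongr
    have e2 : C * (1 + Real.log N) / (N + 1) +
        C * (Real.log (N + 1) - Real.log N) / (N + 1) =
        C * (1 + Real.log (N + 1)) / (N + 1) := by ring
    linarith [hrecn, step1, e1 ▸ step1, step2]
end
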